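/- arXiv:1203.4511 — 5 statements merged into one kernel-verified Lean document; each statement's English description precedes it below -/
import Mathlib

section
/- Let p : {0,...,T} → ℝ with p(k) > 1 for all k and p⁻ = min_k p(k). Then there exist constants C₁, C₂ > 0 such that for every x : {0,...,T+1} → ℝ with x(0) = x(T+1) = 0 and ‖x‖ := (∑_{k=1}^{T+1} |Δx(k-1)|²)^(1/2) ≥ 1, one has ∑_{k=1}^{T+1} |Δx(k-1)|^{p(k-1)} ≥ C₁ ‖x‖^{p⁻} − C₂. -/
open Finset

theorem stmt3 (T : ℕ) (hT : 1 ≤ T) (p : ℕ → ℝ) (hp : ∀ k ∈ Finset.Icc 0 T, 1 < p k)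
    (pm : ℝ) (hpm : pm = (Finset.Icc 0 T).inf' (Finset.nonempty_Icc.mpr (Nat.zero_le T)) p) :
    ∃ C₁ : ℝ, 0 < C₁ ∧ ∃ C₂ : ℝ, 0 < C₂ ∧
      ∀ x : ℕ → ℝ, x 0 = 0 → x (T + 1) = 0 →
        1 ≤ (∑ k ∈ Finset.Icc 1 (T + 1), (x k - x (k - 1)) ^ 2) ^ ((1 : ℝ) / 2) →
        C₁ * ((∑ k ∈ Finset.Icc 1 (T + 1), (x k - x (k - 1)) ^ 2) ^ ((1 : ℝ) / 2)) ^ pm - C₂ ≤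
          ∑ k ∈ Finset.Icc 1 (T + 1), |x k - x (k - 1)| ^ p (k - 1) := by
  have hpm1 : 1 < pm := by
    rw [hpm, Finset.lt_inf'_iff]; exact hp
  have hpm0 : 0 ≤ pm := by linarith
  set N : ℝ := ((T + 1 : ℕ) : ℝ) with hNdef
  have hN : (0 : ℝ) < N := by positivity
  refine ⟨N ^ (-(pm / 2)), Real.rpow_pos_of_pos hN _, 1, one_pos, ?_⟩
  intro x _ _ hx1
  set a : ℕ → ℝ := fun k => x k - x (k - 1) with ha
  set s2 := ∑ k ∈ Finset.Icc 1 (T + 1), a k ^ 2 with hs2def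
  have hs2 : 0 ≤ s2 := Finset.sum_nonneg fun k _ => sq_nonneg _
  set s := s2 ^ ((1 : ℝ) / 2) with hsdef
  have hs0 : 0 ≤ s := Real.rpow_nonneg hs2 _
  have hSne : (Finset.Icc 1 (T + 1)).Nonempty := ⟨1, by simp⟩
  obtain ⟨j, hj, hjmax⟩ := Finset.exists_max_image (Finset.Icc 1 (T + 1)) (fun k => |a k|) hSne
  have hsumnn : 0 ≤ ∑ k ∈ Finset.Icc 1 (T + 1), |a k| ^ p (k - 1) :=
    Finset.sum_nonneg fun k _ => Real.rpow_nonneg (abs_nonneg _) _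
  have hcard : ((Finset.Icc 1 (T + 1)).card : ℝ) = N := by
    rw [Nat.card_Icc]; norm_num [hNdef]
  have hs2le : s2 ≤ N * a j ^ 2 := by
    calc s2 ≤ ∑ _k ∈ Finset.Icc 1 (T + 1), a j ^ 2 := by
          refine Finset.sum_le_sum fun k hk => ?_
          have := hjmax k hk
          calc a k ^ 2 = |a k| ^ 2 := (sq_abs _).symm
            _ ≤ |a j| ^ 2 := by gcongr
            _ = a j ^ 2 := sq_abs _
      _ = N * a j ^ 2 := by rw [Finset.sum_const, nsmul_eq_mul, hcard]
  have haj2 : ((a j ^ 2 : ℝ)) ^ ((1:ℝ)/2) = |a j| := by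
    rw [← sq_abs, ← Real.rpow_natCast |a j| 2, ← Real.rpow_mul (abs_nonneg _)]
    norm_num
  have hsle : s ≤ N ^ ((1:ℝ)/2) * |a j| := by
    calc s ≤ (N * a j ^ 2) ^ ((1:ℝ)/2) := by
          exact Real.rpow_le_rpow hs2 hs2le (by norm_num)
      _ = N ^ ((1:ℝ)/2) * |a j| := by
          rw [Real.mul_rpow hN.le (sq_nonneg _), haj2]
  by_cases h1 : 1 ≤ |a j|
  · have hj' : j - 1 ∈ Finset.Icc 0 T := by
      simp only [Finset.mem_Icc] at hj ⊢
      omega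
    have hpmle : pm ≤ p (j - 1) := hpm ▸ Finset.inf'_le p hj'
    have key : N ^ (-(pm / 2)) * s ^ pm ≤ |a j| ^ pm := by
      have h2 : s / N ^ ((1:ℝ)/2) ≤ |a j| := by
        rw [div_le_iff₀ (Real.rpow_pos_of_pos hN _)]
        linarith [hsle, mul_comm (N ^ ((1:ℝ)/2)) |a j|]
      have h3 : (s / N ^ ((1:ℝ)/2)) ^ pm ≤ |a j| ^ pm :=
        Real.rpow_le_rpow (by positivity) h2 hpm0
      calc N ^ (-(pm / 2)) * s ^ pm = (s / N ^ ((1:ℝ)/2)) ^ pm := by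
            rw [Real.div_rpow hs0 (Real.rpow_nonneg hN.le _),
              ← Real.rpow_mul hN.le]
            rw [Real.rpow_neg hN.le, mul_comm]
            ring_nf
        _ ≤ |a j| ^ pm := h3
    have hterm : |a j| ^ pm ≤ |a j| ^ p (j - 1) :=
      Real.rpow_le_rpow_of_exponent_le h1 hpmle
    have hsingle : |a j| ^ p (j - 1) ≤ ∑ k ∈ Finset.Icc 1 (T + 1), |a k| ^ p (k - 1) :=
      Finset.single_le_sum (f := fun k => |a k| ^ p (k - 1))
        (fun k _ => Real.rpow_nonneg (abs_nonneg _) _) hj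
    linarith
  · push_neg at h1
    have hsN : s ≤ N ^ ((1:ℝ)/2) := by
      calc s ≤ N ^ ((1:ℝ)/2) * |a j| := hsle
        _ ≤ N ^ ((1:ℝ)/2) * 1 := by gcongr
        _ = N ^ ((1:ℝ)/2) := mul_one _
    have h4 : s ^ pm ≤ N ^ (pm / 2) := by
      calc s ^ pm ≤ (N ^ ((1:ℝ)/2)) ^ pm := Real.rpow_le_rpow hs0 hsN hpm0
        _ = N ^ (pm / 2) := by rw [← Real.rpow_mul hN.le]; ring_nf
    have h5 : N ^ (-(pm / 2)) * s ^ pm ≤ 1 := by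
      calc N ^ (-(pm / 2)) * s ^ pm ≤ N ^ (-(pm / 2)) * N ^ (pm / 2) := by gcongr
        _ = 1 := by rw [← Real.rpow_add hN]; norm_num
    linarith
end

section
/- Let T ≥ 1, h : {0,...,T} → ℝ with h⁻ = min h > 0, p : {0,...,T} → ℝ with p⁻ = min p > 1, and suppose f satisfies the growth condition |f(k,x,u)| ≤ a(k)|x|^{q(k)} + b(k) with q(k) > 1. If p⁻ > q⁺ + 1 and λ > 0, then the functional J_u(x) = ∑_{k=1}^{T+1} (h(k-1)/p(k-1)) |Δx(k-1)|^{p(k-1)} − λ ∑_{k=1}^{T} F(k,x(k),u(k)) is coercive on H, i.e. J_u(x) → ∞ as ‖x‖ → ∞. -/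
set_option maxHeartbeats 1000000


open Finset

private lemma telescope8 (x : ℕ → ℝ) :
    ∀ k : ℕ, ∑ j ∈ Finset.Icc 1 k, (x j - x (j - 1)) = x k - x 0
  | 0 => by simp
  | (k + 1) => by
    rw [Finset.sum_Icc_succ_top (Nat.le_add_left 1 k), telescope8 x k]
    simp

private lemma cs8 (s : Finset ℕ) (g : ℕ → ℝ) :
    ∑ j ∈ s, |g j| ≤ Real.sqrt s.card * Real.sqrt (∑ j ∈ s, (g j) ^ 2) := by
  rw [← Real.sqrt_mul (Nat.cast_nonneg _)]
  apply Real.le_sqrt_of_sq_le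
  calc (∑ j ∈ s, |g j|) ^ 2 = (∑ j ∈ s, 1 * |g j|) ^ 2 := by simp
    _ ≤ (∑ j ∈ s, (1 : ℝ) ^ 2) * (∑ j ∈ s, |g j| ^ 2) :=
        Finset.sum_mul_sq_le_sq_mul_sq s _ _
    _ = s.card * ∑ j ∈ s, (g j) ^ 2 := by simp [sq_abs]

theorem stmt8 (T : ℕ) (hT : 1 ≤ T)
    (h p : ℕ → ℝ) (hh : ∀ k ∈ Finset.Icc 0 T, 0 < h k) (hp : ∀ k ∈ Finset.Icc 0 T, 1 < p k)
    (pm : ℝ) (hpm : pm = (Finset.Icc 0 T).inf' (Finset.nonempty_Icc.mpr (Nat.zero_le T)) p)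
    (f : ℕ → ℝ → ℝ → ℝ) (hcont : ∀ k v, Continuous fun t => f k t v)
    (a b q : ℕ → ℝ)
    (ha : ∀ k ∈ Finset.Icc 1 T, 0 ≤ a k) (hb : ∀ k ∈ Finset.Icc 1 T, 0 ≤ b k)
    (hq : ∀ k ∈ Finset.Icc 1 T, 1 < q k)
    (hgrowth : ∀ k ∈ Finset.Icc 1 T, ∀ t v : ℝ, |f k t v| ≤ a k * |t| ^ q k + b k)
    (qP : ℝ) (hqP : qP = (Finset.Icc 1 T).sup' (Finset.nonempty_Icc.mpr hT) q)
    (hexp : qP + 1 < pm)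
    (lam : ℝ) (hlam : 0 < lam) (u : ℕ → ℝ) :
    ∀ M : ℝ, ∃ R : ℝ, ∀ x : ℕ → ℝ, x 0 = 0 → x (T + 1) = 0 →
      R ≤ (∑ k ∈ Finset.Icc 1 (T + 1), (x k - x (k - 1)) ^ 2) ^ ((1 : ℝ) / 2) →
      M ≤ ∑ k ∈ Finset.Icc 1 (T + 1), h (k - 1) / p (k - 1) * |x k - x (k - 1)| ^ p (k - 1) -
            lam * ∑ k ∈ Finset.Icc 1 T, ∫ t in (0 : ℝ)..(x k), f k t (u k) := by
  intro M
  have ne0 : (Finset.Icc 0 T).Nonempty := Finset.nonempty_Icc.mpr (Nat.zero_le T)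
  have ne1 : (Finset.Icc 1 T).Nonempty := Finset.nonempty_Icc.mpr hT
  set hm := (Finset.Icc 0 T).inf' ne0 h with hhm
  set pP := (Finset.Icc 0 T).sup' ne0 p with hpPdef
  have hm_pos : 0 < hm := by
    obtain ⟨k, hk, he⟩ := Finset.exists_mem_eq_inf' ne0 h
    rw [hhm, he]; exact hh k hk
  have pm_gt : 1 < pm := by
    obtain ⟨k, hk, he⟩ := Finset.exists_mem_eq_inf' ne0 p
    rw [hpm, he]; exact hp k hk
  have pP_pos : 0 < pP := by
    have h0 : (0 : ℕ) ∈ Finset.Icc 0 T := by simp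
    have := Finset.le_sup' p h0
    have := hp 0 h0
    rw [hpPdef]; linarith
  have qP_gt : 1 < qP := by
    obtain ⟨k, hk, he⟩ := Finset.exists_mem_eq_sup' ne1 q
    rw [hqP, he]; exact hq k hk
  -- constants
  set c0 : ℝ := hm / pP with hc0
  have c0_pos : 0 < c0 := div_pos hm_pos pP_pos
  set Tn : ℝ := (T : ℝ) + 1 with hTn
  have Tn_pos : 0 < Tn := by positivity
  set Cp : ℝ := Tn ^ (pm / 2) with hCp
  have Cp_pos : 0 < Cp := Real.rpow_pos_of_pos Tn_pos _
  set c1 : ℝ := c0 / Cp with hc1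
  have c1_pos : 0 < c1 := div_pos c0_pos Cp_pos
  set c2 : ℝ := c0 * Tn with hc2
  have c2_pos : 0 < c2 := mul_pos c0_pos Tn_pos
  set D : ℝ := Real.sqrt Tn with hD
  have D1 : 1 ≤ D := by
    rw [hD, show (1 : ℝ) = Real.sqrt 1 from (Real.sqrt_one).symm]
    exact Real.sqrt_le_sqrt (by rw [hTn]; push_cast; linarith)
  have D0 : 0 ≤ D := by linarith
  set A : ℝ := ∑ k ∈ Finset.Icc 1 T, (a k + b k) with hA
  have A0 : 0 ≤ A := Finset.sum_nonneg fun k hk => by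
    have := ha k hk; have := hb k hk; linarith
  set c3 : ℝ := lam * A * D ^ (qP + 1) with hc3
  have c3_nonneg : 0 ≤ c3 := by
    apply mul_nonneg (mul_nonneg hlam.le A0) (Real.rpow_nonneg D0 _)
  set δ : ℝ := pm - (qP + 1) with hδ
  have δ_pos : 0 < δ := by rw [hδ]; linarith
  set K : ℝ := max 1 ((c3 + c2 + |M|) / c1) with hK
  have K1 : (1 : ℝ) ≤ K := le_max_left _ _
  refine ⟨max 1 (K ^ (1 / δ)), ?_⟩
  intro x hx0 hxT hR
  set S2 : ℝ := ∑ k ∈ Finset.Icc 1 (T + 1), (x k - x (k - 1)) ^ 2 with hS2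
  have S2_nonneg : 0 ≤ S2 := Finset.sum_nonneg fun k _ => sq_nonneg _
  set N : ℝ := S2 ^ ((1 : ℝ) / 2) with hNdef
  have hNsqrt : N = Real.sqrt S2 := by rw [hNdef, Real.sqrt_eq_rpow]
  have R1 : (1 : ℝ) ≤ max 1 (K ^ (1 / δ)) := le_max_left _ _
  have hN1 : 1 ≤ N := le_trans R1 hR
  have hN0 : 0 < N := by linarith
  have card11 : ((Finset.Icc 1 (T + 1)).card : ℝ) = Tn := by
    rw [Nat.card_Icc]; rw [hTn]; push_cast; ring
  -- Step 1: lower bound on positive part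
  have key1 : ∀ k ∈ Finset.Icc 1 (T + 1),
      c0 * (|x k - x (k - 1)| ^ pm - 1) ≤
        h (k - 1) / p (k - 1) * |x k - x (k - 1)| ^ p (k - 1) := by
    intro k hk
    have hk' : k - 1 ∈ Finset.Icc 0 T := by
      simp only [Finset.mem_Icc] at hk ⊢; omega
    set t := |x k - x (k - 1)| with hts
    have ht : 0 ≤ t := abs_nonneg _
    have h1 : t ^ pm - 1 ≤ t ^ p (k - 1) := by
      rcases le_or_gt 1 t with hc | hc
      · have : t ^ pm ≤ t ^ p (k - 1) :=
          Real.rpow_le_rpow_of_exponent_le hc (by rw [hpm]; exact Finset.inf'_le p hk')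
        linarith
      · have h2 : t ^ pm ≤ 1 := Real.rpow_le_one ht hc.le (by linarith)
        have h3 : 0 ≤ t ^ p (k - 1) := Real.rpow_nonneg ht _
        linarith
    have h2 : c0 ≤ h (k - 1) / p (k - 1) := by
      rw [hc0]
      exact div_le_div₀ (le_of_lt (hh _ hk')) (hhm ▸ Finset.inf'_le h hk')
        (by linarith [hp _ hk']) (hpPdef ▸ Finset.le_sup' p hk')
    calc c0 * (t ^ pm - 1) ≤ c0 * t ^ p (k - 1) :=
          mul_le_mul_of_nonneg_left h1 c0_pos.le
      _ ≤ h (k - 1) / p (k - 1) * t ^ p (k - 1) :=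
          mul_le_mul_of_nonneg_right h2 (Real.rpow_nonneg ht _)
  -- max term ≥ average
  obtain ⟨k0, hk0, hk0le⟩ : ∃ k ∈ Finset.Icc 1 (T + 1), S2 / Tn ≤ (x k - x (k - 1)) ^ 2 := by
    apply Finset.exists_le_of_sum_le (Finset.nonempty_Icc.mpr (by omega))
    rw [Finset.sum_const, nsmul_eq_mul, card11, hS2]
    rw [mul_div_cancel₀ _ (ne_of_gt Tn_pos)]
  have havg : N ^ pm / Cp ≤ ∑ k ∈ Finset.Icc 1 (T + 1), |x k - x (k - 1)| ^ pm := by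
    have hNpm : N ^ pm = S2 ^ (pm / 2) := by
      rw [hNdef, ← Real.rpow_mul S2_nonneg]
      congr 1; ring
    have e1 : (S2 / Tn) ^ (pm / 2) ≤ ((x k0 - x (k0 - 1)) ^ 2) ^ (pm / 2) :=
      Real.rpow_le_rpow (div_nonneg S2_nonneg Tn_pos.le) hk0le (by positivity)
    have e2 : ((x k0 - x (k0 - 1)) ^ 2) ^ (pm / 2) = |x k0 - x (k0 - 1)| ^ pm := by
      rw [← sq_abs, ← Real.rpow_natCast |x k0 - x (k0 - 1)| 2,
        ← Real.rpow_mul (abs_nonneg _)]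
      push_cast; congr 1; ring
    have e3 : (S2 / Tn) ^ (pm / 2) = N ^ pm / Cp := by
      rw [Real.div_rpow S2_nonneg Tn_pos.le, hNpm, hCp]
    calc N ^ pm / Cp = (S2 / Tn) ^ (pm / 2) := e3.symm
      _ ≤ |x k0 - x (k0 - 1)| ^ pm := e1.trans_eq e2
      _ ≤ ∑ k ∈ Finset.Icc 1 (T + 1), |x k - x (k - 1)| ^ pm :=
          Finset.single_le_sum (f := fun k => |x k - x (k - 1)| ^ pm)
            (fun i _ => Real.rpow_nonneg (abs_nonneg _) _) hk0
  have pos_lb : c1 * N ^ pm - c2 ≤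
      ∑ k ∈ Finset.Icc 1 (T + 1), h (k - 1) / p (k - 1) * |x k - x (k - 1)| ^ p (k - 1) := by
    have hsum := Finset.sum_le_sum key1
    have e : ∑ k ∈ Finset.Icc 1 (T + 1), c0 * (|x k - x (k - 1)| ^ pm - 1)
        = c0 * (∑ k ∈ Finset.Icc 1 (T + 1), |x k - x (k - 1)| ^ pm) - c2 := by
      rw [← Finset.mul_sum, Finset.sum_sub_distrib, Finset.sum_const, nsmul_eq_mul, card11]
      ring
    have e2 : c1 * N ^ pm = c0 * (N ^ pm / Cp) := by rw [hc1]; ring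
    have e3 : c0 * (N ^ pm / Cp) ≤
        c0 * ∑ k ∈ Finset.Icc 1 (T + 1), |x k - x (k - 1)| ^ pm :=
      mul_le_mul_of_nonneg_left havg c0_pos.le
    linarith
  -- Step 2: |x k| ≤ D * N
  have xk_bound : ∀ k ∈ Finset.Icc 1 T, |x k| ≤ D * N := by
    intro k hk
    have hkT : k ≤ T := (Finset.mem_Icc.mp hk).2
    have h1 : x k = ∑ j ∈ Finset.Icc 1 k, (x j - x (j - 1)) := by
      rw [telescope8, hx0, sub_zero]
    calc |x k| = |∑ j ∈ Finset.Icc 1 k, (x j - x (j - 1))| := by rw [← h1]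
      _ ≤ ∑ j ∈ Finset.Icc 1 k, |x j - x (j - 1)| := Finset.abs_sum_le_sum_abs _ _
      _ ≤ ∑ j ∈ Finset.Icc 1 (T + 1), |x j - x (j - 1)| :=
          Finset.sum_le_sum_of_subset_of_nonneg
            (Finset.Icc_subset_Icc_right (by omega)) (fun i _ _ => abs_nonneg _)
      _ ≤ Real.sqrt ((Finset.Icc 1 (T + 1)).card) * Real.sqrt S2 := cs8 _ _
      _ = D * N := by rw [card11, hNsqrt, hD]
  have hDN1 : 1 ≤ D * N := by
    calc (1:ℝ) = 1 * 1 := by ring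
      _ ≤ D * N := mul_le_mul D1 hN1 zero_le_one D0
  have hDN0 : 0 < D * N := by linarith
  -- Step 3: bound each integral
  have int_bound : ∀ k ∈ Finset.Icc 1 T,
      (∫ t in (0 : ℝ)..(x k), f k t (u k)) ≤ (a k + b k) * (D * N) ^ (qP + 1) := by
    intro k hk
    have hv : |x k| ≤ D * N := xk_bound k hk
    have hqk : 1 < q k := hq k hk
    have hak : 0 ≤ a k := ha k hk
    have hbk : 0 ≤ b k := hb k hk
    have hC : ∀ t ∈ Set.uIoc (0 : ℝ) (x k), ‖f k t (u k)‖ ≤ a k * (D * N) ^ q k + b k := by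
      intro t ht
      have h1 : |t| ≤ |x k| := by
        rcases Set.mem_uIoc.mp ht with ⟨h1, h2⟩ | ⟨h1, h2⟩
        · rw [abs_of_pos h1]; exact le_trans h2 (le_abs_self _)
        · rw [abs_of_nonpos h2, abs_of_neg (lt_of_lt_of_le h1 h2)]
          linarith
      have h2 : |t| ^ q k ≤ (D * N) ^ q k :=
        Real.rpow_le_rpow (abs_nonneg t) (le_trans h1 hv) (by linarith)
      calc ‖f k t (u k)‖ = |f k t (u k)| := rfl
        _ ≤ a k * |t| ^ q k + b k := hgrowth k hk t (u k)
        _ ≤ a k * (D * N) ^ q k + b k :=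
            add_le_add_left (mul_le_mul_of_nonneg_left h2 hak) _
    have hint := intervalIntegral.norm_integral_le_of_norm_le_const hC
    have habs : |∫ t in (0 : ℝ)..(x k), f k t (u k)| ≤
        (a k * (D * N) ^ q k + b k) * |x k| := by
      simpa [Real.norm_eq_abs] using hint
    have hCnn : 0 ≤ a k * (D * N) ^ q k + b k :=
      add_nonneg (mul_nonneg hak (Real.rpow_nonneg hDN0.le _)) hbk
    have step1 : (a k * (D * N) ^ q k + b k) * |x k| ≤
        (a k * (D * N) ^ qP + b k) * (D * N) := by
      have hqle : q k ≤ qP := hqP ▸ Finset.le_sup' q hk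
      have h3 : (D * N) ^ q k ≤ (D * N) ^ qP :=
        Real.rpow_le_rpow_of_exponent_le hDN1 hqle
      have h4 : 0 ≤ |x k| := abs_nonneg _
      have h5 : a k * (D * N) ^ q k + b k ≤ a k * (D * N) ^ qP + b k :=
        add_le_add_left (mul_le_mul_of_nonneg_left h3 hak) _
      have h6 : 0 ≤ a k * (D * N) ^ qP + b k :=
        add_nonneg (mul_nonneg hak (Real.rpow_nonneg hDN0.le _)) hbk
      exact mul_le_mul h5 hv h4 h6
    have step2 : (a k * (D * N) ^ qP + b k) * (D * N) ≤ (a k + b k) * (D * N) ^ (qP + 1) := by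
      have e1 : (D * N) ^ qP * (D * N) = (D * N) ^ (qP + 1) :=
        (Real.rpow_add_one (ne_of_gt hDN0) qP).symm
      have e2 : D * N ≤ (D * N) ^ (qP + 1) := by
        have := Real.rpow_le_rpow_of_exponent_le hDN1 (by linarith : (1 : ℝ) ≤ qP + 1)
        rwa [Real.rpow_one] at this
      calc (a k * (D * N) ^ qP + b k) * (D * N)
          = a k * ((D * N) ^ qP * (D * N)) + b k * (D * N) := by ring
        _ = a k * (D * N) ^ (qP + 1) + b k * (D * N) := by rw [e1]
        _ ≤ a k * (D * N) ^ (qP + 1) + b k * (D * N) ^ (qP + 1) :=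
            add_le_add_right (mul_le_mul_of_nonneg_left e2 hbk) _
        _ = (a k + b k) * (D * N) ^ (qP + 1) := by ring
    calc (∫ t in (0 : ℝ)..(x k), f k t (u k)) ≤ |∫ t in (0 : ℝ)..(x k), f k t (u k)| :=
          le_abs_self _
      _ ≤ (a k * (D * N) ^ q k + b k) * |x k| := habs
      _ ≤ (a k * (D * N) ^ qP + b k) * (D * N) := step1
      _ ≤ (a k + b k) * (D * N) ^ (qP + 1) := step2
  have sum_int : (∑ k ∈ Finset.Icc 1 T, ∫ t in (0 : ℝ)..(x k), f k t (u k)) ≤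
      A * D ^ (qP + 1) * N ^ (qP + 1) := by
    calc (∑ k ∈ Finset.Icc 1 T, ∫ t in (0 : ℝ)..(x k), f k t (u k))
        ≤ ∑ k ∈ Finset.Icc 1 T, (a k + b k) * (D * N) ^ (qP + 1) :=
          Finset.sum_le_sum int_bound
      _ = A * (D * N) ^ (qP + 1) := by rw [hA, ← Finset.sum_mul]
      _ = A * D ^ (qP + 1) * N ^ (qP + 1) := by
          rw [Real.mul_rpow D0 hN0.le]; ring
  have neg_bound : lam * (∑ k ∈ Finset.Icc 1 T, ∫ t in (0 : ℝ)..(x k), f k t (u k)) ≤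
      c3 * N ^ (qP + 1) := by
    have := mul_le_mul_of_nonneg_left sum_int hlam.le
    rw [hc3]; linarith
  -- Step 4: put everything together
  have hRN : K ^ (1 / δ) ≤ N := le_trans (le_max_right _ _) (le_trans hR le_rfl)
  have hKδ : K ≤ N ^ δ := by
    have hK0 : (0 : ℝ) ≤ K := by linarith
    have := Real.rpow_le_rpow (Real.rpow_nonneg hK0 _) hRN δ_pos.le
    rwa [← Real.rpow_mul hK0, one_div_mul_cancel (ne_of_gt δ_pos), Real.rpow_one] at this
  have hKge : c3 + c2 + |M| ≤ c1 * K := by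
    have h0 := (div_le_iff₀ c1_pos).mp (le_max_right 1 ((c3 + c2 + |M|) / c1))
    linarith
  have hsplit : N ^ pm = N ^ (qP + 1) * N ^ δ := by
    rw [← Real.rpow_add hN0]; congr 1; rw [hδ]; ring
  have hq1 : 1 ≤ N ^ (qP + 1) := by
    have := Real.rpow_le_rpow_of_exponent_le hN1 (by linarith : (0 : ℝ) ≤ qP + 1)
    rwa [Real.rpow_zero] at this
  have h3 : c2 + |M| ≤ c1 * N ^ δ - c3 := by
    have := mul_le_mul_of_nonneg_left hKδ c1_pos.le
    linarith
  have h4 : c2 + |M| ≤ N ^ (qP + 1) * (c1 * N ^ δ - c3) := by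
    have hnn : 0 ≤ c1 * N ^ δ - c3 := by
      have : (0 : ℝ) ≤ c2 + |M| := by positivity
      linarith
    calc c2 + |M| ≤ c1 * N ^ δ - c3 := h3
      _ ≤ N ^ (qP + 1) * (c1 * N ^ δ - c3) := le_mul_of_one_le_left hnn hq1
  have main : M ≤ c1 * N ^ pm - c2 - c3 * N ^ (qP + 1) := by
    have e : c1 * N ^ pm - c3 * N ^ (qP + 1) = N ^ (qP + 1) * (c1 * N ^ δ - c3) := by
      rw [hsplit]; ring
    have := le_abs_self M
    linarith
  linarith
end

section
/- With the notation of the anisotropic discrete problem, if p⁻ = q⁺ + 1 and 0 < λ < C₁h⁻(q⁻+1)/(p⁺ a⁺ c_{q⁺+1}), then J_u(x) = ∑_{k=1}^{T+1} (h(k-1)/p(k-1)) |Δx(k-1)|^{p(k-1)} − λ ∑_{k=1}^{T} F(k,x(k),u(k)) is coercive on H. -/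
open Finset

lemma aux_add_rpow (a b : ℝ) (ha : 0 ≤ a) (hb : 0 ≤ b) {e : ℝ} (he : 1 ≤ e) :
    a ^ e + b ^ e ≤ (a + b) ^ e := by
  have := NNReal.add_rpow_le_rpow_add (Real.toNNReal a) (Real.toNNReal b) he
  have h3 := NNReal.coe_le_coe.mpr this
  simpa [Real.coe_toNNReal _ ha, Real.coe_toNNReal _ hb, NNReal.coe_rpow] using h3

lemma aux_sum_rpow {ι : Type*} (s : Finset ι) (g : ι → ℝ) (hg : ∀ i ∈ s, 0 ≤ g i)
    {e : ℝ} (he : 1 ≤ e) : ∑ i ∈ s, g i ^ e ≤ (∑ i ∈ s, g i) ^ e := by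
  induction s using Finset.cons_induction with
  | empty => simp [Real.zero_rpow (by linarith : e ≠ 0)]
  | cons i s his ih =>
    rw [Finset.sum_cons, Finset.sum_cons]
    have h1 : ∑ j ∈ s, g j ^ e ≤ (∑ j ∈ s, g j) ^ e :=
      ih (fun j hj => hg j (Finset.mem_cons_of_mem hj))
    have h2 := aux_add_rpow (g i) (∑ j ∈ s, g j) (hg i (Finset.mem_cons_self i s))
      (Finset.sum_nonneg fun j hj => hg j (Finset.mem_cons_of_mem hj)) he
    linarith

lemma aux_int_eval (A B Q c : ℝ) (hQ : 0 < Q) (hc : 0 ≤ c) :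
    ∫ t in (0:ℝ)..c, (A * |t| ^ Q + B) = A / (Q + 1) * c ^ (Q + 1) + B * c := by
  have h1 : ∫ t in (0:ℝ)..c, (A * |t| ^ Q + B) = ∫ t in (0:ℝ)..c, (A * t ^ Q + B) := by
    apply intervalIntegral.integral_congr
    intro t ht
    rw [Set.uIcc_of_le hc] at ht
    simp only [abs_of_nonneg ht.1]
  rw [h1]
  have hint : IntervalIntegrable (fun t : ℝ => t ^ Q) MeasureTheory.volume 0 c :=
    intervalIntegral.intervalIntegrable_rpow' (by linarith)
  rw [intervalIntegral.integral_add ((hint.const_mul A)) intervalIntegrable_const,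
    intervalIntegral.integral_const_mul, integral_rpow (Or.inl (by linarith)),
    intervalIntegral.integral_const]
  rw [Real.zero_rpow (by linarith : Q + 1 ≠ 0), smul_eq_mul]
  ring

lemma aux_F_bound (f : ℝ → ℝ) (hf : Continuous f) (A B Q : ℝ) (hA : 0 ≤ A) (hB : 0 ≤ B)
    (hQ : 0 < Q) (hg : ∀ t, |f t| ≤ A * |t| ^ Q + B) (v : ℝ) :
    |∫ t in (0:ℝ)..v, f t| ≤ A / (Q + 1) * |v| ^ (Q + 1) + B * |v| := by
  have hgc : Continuous fun t : ℝ => A * |t| ^ Q + B :=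
    (continuous_const.mul (continuous_abs.rpow_const fun x => Or.inr hQ.le)).add continuous_const
  rcases le_or_gt 0 v with hv | hv
  · calc |∫ t in (0:ℝ)..v, f t| ≤ ∫ t in (0:ℝ)..v, |f t| :=
        intervalIntegral.abs_integral_le_integral_abs hv
    _ ≤ ∫ t in (0:ℝ)..v, (A * |t| ^ Q + B) := by
        apply intervalIntegral.integral_mono_on hv (hf.abs.intervalIntegrable _ _)
          (hgc.intervalIntegrable _ _) (fun t _ => hg t)
    _ = A / (Q + 1) * |v| ^ (Q + 1) + B * |v| := by
        rw [aux_int_eval A B Q v hQ hv, abs_of_nonneg hv]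
  · have h0 : |∫ t in (0:ℝ)..v, f t| = |∫ t in v..(0:ℝ), f t| := by
      rw [intervalIntegral.integral_symm, abs_neg]
    rw [h0]
    calc |∫ t in v..(0:ℝ), f t| ≤ ∫ t in v..(0:ℝ), |f t| :=
        intervalIntegral.abs_integral_le_integral_abs hv.le
    _ ≤ ∫ t in v..(0:ℝ), (A * |t| ^ Q + B) := by
        apply intervalIntegral.integral_mono_on hv.le (hf.abs.intervalIntegrable _ _)
          (hgc.intervalIntegrable _ _) (fun t _ => hg t)
    _ = ∫ t in (0:ℝ)..(-v), (A * |t| ^ Q + B) := by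
        have := intervalIntegral.integral_comp_neg (a := (0:ℝ)) (b := -v)
          (f := fun t : ℝ => A * |t| ^ Q + B)
        simp only [abs_neg, neg_neg, neg_zero] at this
        exact this.symm
    _ = A / (Q + 1) * |v| ^ (Q + 1) + B * |v| := by
        rw [aux_int_eval A B Q (-v) hQ (by linarith), abs_of_neg hv]

lemma aux_abs_rpow_sq (d e : ℝ) : |d| ^ e = (d ^ 2) ^ (e / 2) := by
  rw [← sq_abs, ← Real.rpow_natCast |d| 2, ← Real.rpow_mul (abs_nonneg d)]
  congr 1
  push_cast
  ring

theorem stmt9 (T : ℕ) (hT : 1 ≤ T)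
    (h p : ℕ → ℝ) (hh : ∀ k ∈ Finset.Icc 0 T, 0 < h k) (hp : ∀ k ∈ Finset.Icc 0 T, 1 < p k)
    (hm pm pP : ℝ)
    (hhm : hm = (Finset.Icc 0 T).inf' (Finset.nonempty_Icc.mpr (Nat.zero_le T)) h)
    (hpm : pm = (Finset.Icc 0 T).inf' (Finset.nonempty_Icc.mpr (Nat.zero_le T)) p)
    (hpP : pP = (Finset.Icc 0 T).sup' (Finset.nonempty_Icc.mpr (Nat.zero_le T)) p)
    (f : ℕ → ℝ → ℝ → ℝ) (hcont : ∀ k v, Continuous fun t => f k t v)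
    (a b q : ℕ → ℝ)
    (ha : ∀ k ∈ Finset.Icc 1 T, 0 ≤ a k) (hb : ∀ k ∈ Finset.Icc 1 T, 0 ≤ b k)
    (hq : ∀ k ∈ Finset.Icc 1 T, 1 < q k)
    (hgrowth : ∀ k ∈ Finset.Icc 1 T, ∀ t v : ℝ, |f k t v| ≤ a k * |t| ^ q k + b k)
    (aP qP qm : ℝ)
    (haP : aP = (Finset.Icc 1 T).sup' (Finset.nonempty_Icc.mpr hT) a)
    (hqP : qP = (Finset.Icc 1 T).sup' (Finset.nonempty_Icc.mpr hT) q)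
    (hqm : qm = (Finset.Icc 1 T).inf' (Finset.nonempty_Icc.mpr hT) q)
    (C₁ C₂ : ℝ) (hC₁ : 0 < C₁) (hC₂ : 0 < C₂)
    (hcoerc : ∀ x : ℕ → ℝ, x 0 = 0 → x (T + 1) = 0 →
      1 ≤ (∑ k ∈ Finset.Icc 1 (T + 1), (x k - x (k - 1)) ^ 2) ^ ((1 : ℝ) / 2) →
      C₁ * ((∑ k ∈ Finset.Icc 1 (T + 1), (x k - x (k - 1)) ^ 2) ^ ((1 : ℝ) / 2)) ^ pm - C₂ ≤
        ∑ k ∈ Finset.Icc 1 (T + 1), |x k - x (k - 1)| ^ p (k - 1))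
    (cQ : ℝ) (hcQpos : 0 < cQ)
    (hcQ : ∀ x : ℕ → ℝ, x 0 = 0 → x (T + 1) = 0 →
      ∑ k ∈ Finset.Icc 1 T, |x k| ^ (qP + 1) ≤
        cQ * ∑ k ∈ Finset.Icc 1 (T + 1), |x k - x (k - 1)| ^ (qP + 1))
    (hexp : pm = qP + 1)
    (lam : ℝ) (hlam0 : 0 < lam) (hlam : lam < C₁ * hm * (qm + 1) / (pP * aP * cQ))
    (u : ℕ → ℝ) :
    ∀ M : ℝ, ∃ R : ℝ, ∀ x : ℕ → ℝ, x 0 = 0 → x (T + 1) = 0 →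
      R ≤ (∑ k ∈ Finset.Icc 1 (T + 1), (x k - x (k - 1)) ^ 2) ^ ((1 : ℝ) / 2) →
      M ≤ ∑ k ∈ Finset.Icc 1 (T + 1), h (k - 1) / p (k - 1) * |x k - x (k - 1)| ^ p (k - 1) -
            lam * ∑ k ∈ Finset.Icc 1 T, ∫ t in (0 : ℝ)..(x k), f k t (u k) := by
  intro M
  -- basic positivity facts
  have hmemT : ∀ k ∈ Finset.Icc 1 (T + 1), k - 1 ∈ Finset.Icc 0 T := by
    intro k hk; simp only [Finset.mem_Icc] at hk ⊢; omega
  have hhm_pos : 0 < hm := by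
    obtain ⟨k, hk, hke⟩ :=
      Finset.exists_mem_eq_inf' (Finset.nonempty_Icc.mpr (Nat.zero_le T)) h
    rw [hhm, hke]; exact hh k hk
  have hpP1 : 1 < pP := lt_of_lt_of_le (hp 0 (by simp)) (hpP ▸ Finset.le_sup' p (by simp))
  have hpP0 : 0 < pP := by linarith
  have hqm1 : 1 < qm := by
    obtain ⟨k, hk, hke⟩ := Finset.exists_mem_eq_inf' (Finset.nonempty_Icc.mpr hT) q
    rw [hqm, hke]; exact hq k hk
  have hqm0 : 0 < qm + 1 := by linarith
  have hqP1 : 1 < qP :=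
    lt_of_lt_of_le (hq 1 (by simp [hT])) (hqP ▸ Finset.le_sup' q (by simp [hT]))
  have hpm2 : 2 < pm := by rw [hexp]; linarith
  have haP0 : 0 ≤ aP :=
    le_trans (ha 1 (by simp [hT])) (haP ▸ Finset.le_sup' a (by simp [hT]))
  have haP_pos : 0 < aP := by
    rcases haP0.lt_or_eq with h' | h'
    · exact h'
    · exfalso; rw [← h', mul_zero, zero_mul, div_zero] at hlam; linarith
  have hden : 0 < pP * aP * cQ := by positivity
  have hlam' : lam * (pP * aP * cQ) < C₁ * hm * (qm + 1) := (lt_div_iff₀ hden).mp hlam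
  set bP : ℝ := (Finset.Icc 1 T).sup' (Finset.nonempty_Icc.mpr hT) b with hbP
  have hbP0 : 0 ≤ bP :=
    le_trans (hb 1 (by simp [hT])) (Finset.le_sup' b (by simp [hT]))
  set ε : ℝ := C₁ * hm / pP - lam * (aP * cQ / (qm + 1)) with hεdef
  have hε : 0 < ε := by
    rw [hεdef, sub_pos, show lam * (aP * cQ / (qm + 1)) = lam * aP * cQ / (qm + 1) by ring,
      div_lt_div_iff₀ hqm0 hpP0]
    nlinarith [hlam']
  set c₃ : ℝ := lam * bP * ((T + 1) * T) with hc₃def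
  set c₄ : ℝ := hm / pP * C₂ + lam * (aP / (qm + 1) * T) with hc₄def
  clear_value bP ε c₃ c₄
  have hc₃0 : 0 ≤ c₃ := by rw [hc₃def]; positivity
  have hc₄0 : 0 ≤ c₄ := by rw [hc₄def]; positivity
  refine ⟨max 1 ((|M| + c₄ + c₃ + 1) / ε), ?_⟩
  intro x hx0 hxT hr
  set s : ℝ := ∑ k ∈ Finset.Icc 1 (T + 1), (x k - x (k - 1)) ^ 2 with hsdef
  set r : ℝ := s ^ ((1 : ℝ) / 2) with hrdef
  clear_value s r
  have hs0 : 0 ≤ s := by rw [hsdef]; exact Finset.sum_nonneg fun k _ => sq_nonneg _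
  have hr0 : 0 ≤ r := by rw [hrdef]; exact Real.rpow_nonneg hs0 _
  have hr1 : 1 ≤ r := le_trans (le_max_left _ _) hr
  have hr2 : (|M| + c₄ + c₃ + 1) / ε ≤ r := le_trans (le_max_right _ _) hr
  have hrsq : r ^ 2 = s := by
    rw [hrdef, ← Real.rpow_natCast (s ^ ((1:ℝ)/2)) 2, ← Real.rpow_mul hs0]
    norm_num
  -- each difference is at most r
  have hdle : ∀ k ∈ Finset.Icc 1 (T + 1), |x k - x (k - 1)| ≤ r := by
    intro k hk
    have h1 : (x k - x (k - 1)) ^ 2 ≤ s := by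
      rw [hsdef]
      exact Finset.single_le_sum (f := fun j => (x j - x (j - 1)) ^ 2) (fun i _ => sq_nonneg _) hk
    calc |x k - x (k - 1)| = Real.sqrt ((x k - x (k - 1)) ^ 2) := (Real.sqrt_sq_eq_abs _).symm
    _ ≤ Real.sqrt s := Real.sqrt_le_sqrt h1
    _ = r := by rw [← hrsq, Real.sqrt_sq hr0]
  -- pointwise bound on |x k|
  have hxk : ∀ k, k ≤ T + 1 → |x k| ≤ (k : ℝ) * r := by
    intro k
    induction k with
    | zero => intro _; simp [hx0]
    | succ n ih =>
      intro hn
      have h1 := ih (by omega)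
      have h2 : |x (n + 1) - x (n + 1 - 1)| ≤ r :=
        hdle (n + 1) (by simp only [Finset.mem_Icc]; omega)
      have h3 : n + 1 - 1 = n := by omega
      rw [h3] at h2
      calc |x (n + 1)| = |x n + (x (n + 1) - x n)| := by
            rw [show x n + (x (n + 1) - x n) = x (n + 1) by ring]
      _ ≤ |x n| + |x (n + 1) - x n| := abs_add_le _ _
      _ ≤ (n : ℝ) * r + r := add_le_add h1 h2
      _ = ((n + 1 : ℕ) : ℝ) * r := by push_cast; ring
  have hxkT : ∀ k ∈ Finset.Icc 1 T, |x k| ≤ ((T : ℝ) + 1) * r := by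
    intro k hk
    simp only [Finset.mem_Icc] at hk
    refine le_trans (hxk k (by omega)) (mul_le_mul_of_nonneg_right ?_ hr0)
    push_cast; exact_mod_cast by exact_mod_cast Nat.cast_le.mpr (by omega : k ≤ T + 1)
  -- sum of differences to power pm is at most r ^ pm
  have hsum_pm : ∑ k ∈ Finset.Icc 1 (T + 1), |x k - x (k - 1)| ^ (qP + 1) ≤ r ^ pm := by
    have e2 : 1 ≤ pm / 2 := by linarith
    calc ∑ k ∈ Finset.Icc 1 (T + 1), |x k - x (k - 1)| ^ (qP + 1)
        = ∑ k ∈ Finset.Icc 1 (T + 1), ((x k - x (k - 1)) ^ 2) ^ (pm / 2) := by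
          refine Finset.sum_congr rfl fun k _ => ?_
          rw [← hexp, aux_abs_rpow_sq]
    _ ≤ (∑ k ∈ Finset.Icc 1 (T + 1), (x k - x (k - 1)) ^ 2) ^ (pm / 2) :=
          aux_sum_rpow _ _ (fun _ _ => sq_nonneg _) e2
    _ = r ^ pm := by
          rw [hrdef, ← Real.rpow_mul hs0, ← hsdef]
          congr 1
          ring
  -- lower bound on the main (gradient) term
  have hA : hm / pP * (C₁ * r ^ pm - C₂) ≤
      ∑ k ∈ Finset.Icc 1 (T + 1), h (k - 1) / p (k - 1) * |x k - x (k - 1)| ^ p (k - 1) := by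
    have step2 := hcoerc x hx0 hxT (by rw [← hsdef, ← hrdef]; exact hr1)
    rw [← hsdef, ← hrdef] at step2
    calc hm / pP * (C₁ * r ^ pm - C₂)
        ≤ hm / pP * ∑ k ∈ Finset.Icc 1 (T + 1), |x k - x (k - 1)| ^ p (k - 1) := by
          apply mul_le_mul_of_nonneg_left _ (by positivity)
          exact step2
    _ = ∑ k ∈ Finset.Icc 1 (T + 1), hm / pP * |x k - x (k - 1)| ^ p (k - 1) :=
          Finset.mul_sum _ _ _
    _ ≤ ∑ k ∈ Finset.Icc 1 (T + 1), h (k - 1) / p (k - 1) * |x k - x (k - 1)| ^ p (k - 1) := by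
          refine Finset.sum_le_sum fun k hk => ?_
          have hmem := hmemT k hk
          refine mul_le_mul_of_nonneg_right ?_ (Real.rpow_nonneg (abs_nonneg _) _)
          exact div_le_div₀ (le_of_lt (hh _ hmem)) (hhm ▸ Finset.inf'_le h hmem)
            (lt_trans one_pos (hp _ hmem)) (hpP ▸ Finset.le_sup' p hmem)
  -- upper bound on the nonlinear term
  have hB : ∑ k ∈ Finset.Icc 1 T, ∫ t in (0 : ℝ)..(x k), f k t (u k)
      ≤ aP / (qm + 1) * (cQ * r ^ pm) + aP / (qm + 1) * T + bP * (((T : ℝ) + 1) * r) * T := by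
    calc ∑ k ∈ Finset.Icc 1 T, ∫ t in (0 : ℝ)..(x k), f k t (u k)
        ≤ ∑ k ∈ Finset.Icc 1 T,
            (aP / (qm + 1) * (|x k| ^ (qP + 1) + 1) + bP * (((T : ℝ) + 1) * r)) := by
          refine Finset.sum_le_sum fun k hk => ?_
          have hF := aux_F_bound (fun t => f k t (u k)) (hcont k (u k)) (a k) (b k) (q k)
            (ha k hk) (hb k hk) (by linarith [hq k hk]) (fun t => hgrowth k hk t (u k)) (x k)
          refine le_trans (le_abs_self _) (le_trans hF ?_)
          have t1 : a k / (q k + 1) ≤ aP / (qm + 1) :=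
            div_le_div₀ haP0 (haP ▸ Finset.le_sup' a hk) hqm0
              (by linarith [hqm ▸ Finset.inf'_le q hk])
          have t2 : |x k| ^ (q k + 1) ≤ |x k| ^ (qP + 1) + 1 := by
            rcases le_or_gt (|x k|) 1 with h1 | h1
            · have h2 := Real.rpow_le_one (abs_nonneg _) h1
                (by linarith [hq k hk] : (0:ℝ) ≤ q k + 1)
              have h3 : (0:ℝ) ≤ |x k| ^ (qP + 1) := Real.rpow_nonneg (abs_nonneg _) _
              linarith
            · have h2 := Real.rpow_le_rpow_of_exponent_le h1.le
                (by linarith [hqP ▸ Finset.le_sup' q hk] : q k + 1 ≤ qP + 1)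
              linarith
          have t3 : b k * |x k| ≤ bP * (((T : ℝ) + 1) * r) :=
            mul_le_mul (le_trans (Finset.le_sup' b hk) hbP.ge) (hxkT k hk) (abs_nonneg _) hbP0
          have t4 : (0:ℝ) ≤ |x k| ^ (q k + 1) := Real.rpow_nonneg (abs_nonneg _) _
          have t5 : a k / (q k + 1) * |x k| ^ (q k + 1)
              ≤ aP / (qm + 1) * (|x k| ^ (qP + 1) + 1) :=
            mul_le_mul t1 t2 t4 (by positivity)
          linarith
    _ = aP / (qm + 1) * (∑ k ∈ Finset.Icc 1 T, |x k| ^ (qP + 1)) + aP / (qm + 1) * T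
          + bP * (((T : ℝ) + 1) * r) * T := by
          rw [Finset.sum_add_distrib, Finset.sum_const, Nat.card_Icc]
          simp only [Nat.add_sub_cancel, nsmul_eq_mul, mul_add, Finset.mul_sum,
            Finset.sum_add_distrib, Finset.sum_const, Nat.card_Icc]
          ring
    _ ≤ aP / (qm + 1) * (cQ * r ^ pm) + aP / (qm + 1) * T + bP * (((T : ℝ) + 1) * r) * T := by
          have h1 := hcQ x hx0 hxT
          have h2 : cQ * ∑ k ∈ Finset.Icc 1 (T + 1), |x k - x (k - 1)| ^ (qP + 1)
              ≤ cQ * r ^ pm := mul_le_mul_of_nonneg_left hsum_pm hcQpos.le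
          have h3 : (0:ℝ) ≤ aP / (qm + 1) := by positivity
          have h4 := mul_le_mul_of_nonneg_left (le_trans h1 h2) h3
          linarith
  -- assemble
  have hAB : hm / pP * (C₁ * r ^ pm - C₂)
      - lam * (aP / (qm + 1) * (cQ * r ^ pm) + aP / (qm + 1) * T
          + bP * (((T : ℝ) + 1) * r) * T)
      ≤ ∑ k ∈ Finset.Icc 1 (T + 1), h (k - 1) / p (k - 1) * |x k - x (k - 1)| ^ p (k - 1) -
          lam * ∑ k ∈ Finset.Icc 1 T, ∫ t in (0 : ℝ)..(x k), f k t (u k) :=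
    sub_le_sub hA (mul_le_mul_of_nonneg_left hB hlam0.le)
  have hval : hm / pP * (C₁ * r ^ pm - C₂)
      - lam * (aP / (qm + 1) * (cQ * r ^ pm) + aP / (qm + 1) * T
          + bP * (((T : ℝ) + 1) * r) * T)
      = ε * r ^ pm - c₃ * r - c₄ := by
    rw [hεdef, hc₃def, hc₄def]; ring
  have h5 : r * r ≤ r ^ pm := by
    calc r * r = r ^ (2:ℝ) := by
          rw [show (2:ℝ) = ((2:ℕ):ℝ) by norm_num, Real.rpow_natCast]; ring
    _ ≤ r ^ pm := Real.rpow_le_rpow_of_exponent_le hr1 (by linarith)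
  have h6 : |M| + c₄ + c₃ + 1 ≤ ε * r := by
    rw [div_le_iff₀ hε] at hr2; linarith
  have h7 : (|M| + c₄ + c₃ + 1) * r ≤ ε * r * r :=
    mul_le_mul_of_nonneg_right h6 hr0
  have h8 : ε * (r * r) ≤ ε * r ^ pm := mul_le_mul_of_nonneg_left h5 hε.le
  have h9 : |M| + c₄ + 1 ≤ (|M| + c₄ + 1) * r :=
    le_mul_of_one_le_right (by positivity) hr1
  have hfin : M ≤ ε * r ^ pm - c₃ * r - c₄ := by
    linarith [le_abs_self M, h7, h8, h9]
  rw [hval] at hAB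
  linarith [hfin, hAB]
end

section
/- Under H1, H2, H3 and the exponent condition (p⁻ > q⁺+1, λ > 0, or p⁻ = q⁺+1 with λ < C₁h⁻(q⁻+1)/(p⁺a⁺c_{q⁺+1})), any family {x_{u_n}} of solutions to the discrete anisotropic Dirichlet problem corresponding to any sequence of parameters {u_n} is bounded in H: there exists γ > 0 with ‖x_{u_n}‖ ≤ γ for all n. -/
open Finset

noncomputable def NN13 (T : ℕ) (y : ℕ → ℝ) : ℝ :=
  (∑ k ∈ Finset.Icc 1 (T + 1), (y k - y (k - 1)) ^ 2) ^ ((1 : ℝ) / 2)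


lemma sum_shift13 (m : ℕ) (g : ℕ → ℝ) :
    ∑ k ∈ Finset.Icc 1 m, g k = ∑ j ∈ Finset.range m, g (j + 1) := by
  rw [← Finset.Ico_add_one_right_eq_Icc, Finset.sum_Ico_eq_sum_range]
  exact Finset.sum_congr (by norm_num) fun j _ => by rw [Nat.add_comm]

lemma abel_sum13 (Tn : ℕ) (φ X : ℕ → ℝ) (hX0 : X 0 = 0) (hXT : X (Tn + 1) = 0) :
    ∑ j ∈ Finset.range (Tn + 1), φ j * (X (j + 1) - X j)
      = ∑ j ∈ Finset.range Tn, (φ j - φ (j + 1)) * X (j + 1) := by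
  have h1 : ∑ j ∈ Finset.range (Tn+1), φ j * (X (j+1) - X j)
      = ∑ j ∈ Finset.range (Tn+1), φ j * X (j+1)
        - ∑ j ∈ Finset.range (Tn+1), φ j * X j := by
    rw [← Finset.sum_sub_distrib]
    exact Finset.sum_congr rfl fun j _ => by ring
  rw [h1, Finset.sum_range_succ, hXT, Finset.sum_range_succ' (fun j => φ j * X j), hX0]
  simp only [mul_zero, add_zero, sub_zero]
  rw [← Finset.sum_sub_distrib]
  exact Finset.sum_congr rfl fun j _ => by ring

lemma abs_rpow_self13 (t r : ℝ) (hr : r ≠ 0) : |t| ^ (r - 2) * t * t = |t| ^ r := by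
  rcases eq_or_ne t 0 with h | h
  · simp [h, Real.zero_rpow hr]
  · have ht : 0 < |t| := abs_pos.mpr h
    have h2 : t * t = |t| ^ (2:ℝ) := by
      rw [Real.rpow_two, ← abs_mul_abs_self t]
      ring
    rw [mul_assoc, h2, ← Real.rpow_add ht]
    norm_num

lemma sum_rpow_le13 (s : Finset ℕ) (g : ℕ → ℝ) (hg : ∀ k ∈ s, 0 ≤ g k) (e : ℝ) (he : 1 ≤ e) :
    ∑ k ∈ s, g k ^ e ≤ (∑ k ∈ s, g k) ^ e := by
  have hS0 : 0 ≤ ∑ k ∈ s, g k := Finset.sum_nonneg hg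
  have he0 : e ≠ 0 := by linarith
  have hsplit : ∀ x : ℝ, 0 ≤ x → x ^ e = x ^ (e - 1) * x := by
    intro x hx
    nth_rewrite 1 [show e = (e-1) + 1 by ring]
    rw [Real.rpow_add' hx (by rw [sub_add_cancel]; exact he0), Real.rpow_one]
  calc ∑ k ∈ s, g k ^ e ≤ ∑ k ∈ s, (∑ j ∈ s, g j) ^ (e - 1) * g k := by
        apply Finset.sum_le_sum
        intro k hk
        rw [hsplit (g k) (hg k hk)]
        exact mul_le_mul_of_nonneg_right
          (Real.rpow_le_rpow (hg k hk) (Finset.single_le_sum hg hk) (by linarith))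
          (hg k hk)
    _ = (∑ j ∈ s, g j) ^ (e - 1) * ∑ k ∈ s, g k := by rw [Finset.mul_sum]
    _ = (∑ j ∈ s, g j) ^ e := (hsplit _ hS0).symm

lemma NN13_nonneg (T : ℕ) (y : ℕ → ℝ) : 0 ≤ NN13 T y :=
  Real.rpow_nonneg (Finset.sum_nonneg fun _ _ => sq_nonneg _) _

lemma sum_abs_rpow_le_NN13 (T : ℕ) (y : ℕ → ℝ) (r : ℝ) (hr : 2 ≤ r) :
    ∑ k ∈ Finset.Icc 1 (T + 1), |y k - y (k - 1)| ^ r ≤ (NN13 T y) ^ r := by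
  have hS0 : 0 ≤ ∑ k ∈ Finset.Icc 1 (T + 1), (y k - y (k - 1)) ^ 2 :=
    Finset.sum_nonneg fun _ _ => sq_nonneg _
  have h1 : ∀ k, |y k - y (k - 1)| ^ r = ((y k - y (k - 1)) ^ 2) ^ (r / 2) := by
    intro k
    rw [← sq_abs, ← Real.rpow_natCast (|y k - y (k-1)|) 2, ← Real.rpow_mul (abs_nonneg _)]
    norm_num
    congr 1
    ring
  calc ∑ k ∈ Finset.Icc 1 (T + 1), |y k - y (k - 1)| ^ r
      = ∑ k ∈ Finset.Icc 1 (T + 1), ((y k - y (k - 1)) ^ 2) ^ (r / 2) :=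
        Finset.sum_congr rfl fun k _ => h1 k
    _ ≤ (∑ k ∈ Finset.Icc 1 (T + 1), (y k - y (k - 1)) ^ 2) ^ (r / 2) :=
        sum_rpow_le13 _ _ (fun _ _ => sq_nonneg _) _ (by linarith)
    _ = (NN13 T y) ^ r := by
        rw [NN13, ← Real.rpow_mul hS0]
        congr 1
        ring

lemma abs_le_NN13 (T : ℕ) (y : ℕ → ℝ) (hy0 : y 0 = 0) (k : ℕ) (hk : k ≤ T + 1) :
    |y k| ≤ Real.sqrt (T + 1) * NN13 T y := by
  have h1 : y k = ∑ j ∈ Finset.range k, (y (j + 1) - y j) := by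
    rw [Finset.sum_range_sub y k, hy0, sub_zero]
  have h2 : |y k| ≤ ∑ j ∈ Finset.range (T + 1), |y (j + 1) - y j| := by
    rw [h1]
    exact (Finset.abs_sum_le_sum_abs _ _).trans
      (Finset.sum_le_sum_of_subset_of_nonneg (Finset.range_subset_range.mpr hk)
        fun _ _ _ => abs_nonneg _)
  have h3 : ∑ j ∈ Finset.range (T + 1), |y (j + 1) - y j|
      = ∑ k ∈ Finset.Icc 1 (T + 1), |y k - y (k - 1)| := by
    rw [sum_shift13]
    exact Finset.sum_congr rfl fun j _ => by simp
  have h4 : (∑ k ∈ Finset.Icc 1 (T + 1), |y k - y (k - 1)|) ^ 2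
      ≤ (T + 1 : ℝ) * ∑ k ∈ Finset.Icc 1 (T + 1), (y k - y (k - 1)) ^ 2 := by
    have := sq_sum_le_card_mul_sum_sq (s := Finset.Icc 1 (T + 1))
      (f := fun k => |y k - y (k - 1)|)
    simpa [Nat.card_Icc, sq_abs] using this
  have hS0 : 0 ≤ ∑ k ∈ Finset.Icc 1 (T + 1), (y k - y (k - 1)) ^ 2 :=
    Finset.sum_nonneg fun _ _ => sq_nonneg _
  have h5 : ∑ k ∈ Finset.Icc 1 (T + 1), |y k - y (k - 1)|
      ≤ Real.sqrt ((T + 1 : ℝ) * ∑ k ∈ Finset.Icc 1 (T + 1), (y k - y (k - 1)) ^ 2) :=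
    (Real.le_sqrt (Finset.sum_nonneg fun _ _ => abs_nonneg _) (by positivity)).mpr h4
  have h6 : Real.sqrt ((T + 1 : ℝ) * ∑ k ∈ Finset.Icc 1 (T + 1), (y k - y (k - 1)) ^ 2)
      = Real.sqrt (T + 1) * NN13 T y := by
    rw [Real.sqrt_mul (by positivity), NN13, Real.sqrt_eq_rpow
      (∑ k ∈ Finset.Icc 1 (T + 1), (y k - y (k - 1)) ^ 2)]
  calc |y k| ≤ _ := h2
    _ = _ := h3
    _ ≤ _ := h5
    _ = _ := h6

lemma abs_rpow_mul_self13 (t r : ℝ) (h : r + 1 ≠ 0) : |t| ^ r * |t| = |t| ^ (r + 1) := by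
  rcases eq_or_ne t 0 with h0 | h0
  · simp [h0, Real.zero_rpow h]
  · rw [Real.rpow_add_one (abs_ne_zero.mpr h0)]
theorem stmt13 (T : ℕ) (hT : 1 ≤ T)
    (h p : ℕ → ℝ) (hh : ∀ k ∈ Finset.Icc 0 T, 0 < h k) (hp : ∀ k ∈ Finset.Icc 0 T, 1 < p k)
    (hm pm pP : ℝ)
    (hhm : hm = (Finset.Icc 0 T).inf' (Finset.nonempty_Icc.mpr (Nat.zero_le T)) h)
    (hpm : pm = (Finset.Icc 0 T).inf' (Finset.nonempty_Icc.mpr (Nat.zero_le T)) p)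
    (hpP : pP = (Finset.Icc 0 T).sup' (Finset.nonempty_Icc.mpr (Nat.zero_le T)) p)
    (f : ℕ → ℝ → ℝ → ℝ) (hcont : ∀ k v, Continuous fun t => f k t v)
    -- H1
    (a b q : ℕ → ℝ)
    (ha : ∀ k ∈ Finset.Icc 1 T, 0 ≤ a k) (hb : ∀ k ∈ Finset.Icc 1 T, 0 ≤ b k)
    (hq : ∀ k ∈ Finset.Icc 1 T, 1 < q k)
    (hgrowth : ∀ k ∈ Finset.Icc 1 T, ∀ t v : ℝ, |f k t v| ≤ a k * |t| ^ q k + b k)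
    -- H2
    (hantitone : ∀ k ∈ Finset.Icc 1 T, ∀ v : ℝ, Antitone fun t => f k t v)
    (aP qP qm : ℝ)
    (haP : aP = (Finset.Icc 1 T).sup' (Finset.nonempty_Icc.mpr hT) a)
    (hqP : qP = (Finset.Icc 1 T).sup' (Finset.nonempty_Icc.mpr hT) q)
    (hqm : qm = (Finset.Icc 1 T).inf' (Finset.nonempty_Icc.mpr hT) q)
    (C₁ C₂ : ℝ) (hC₁ : 0 < C₁) (hC₂ : 0 < C₂)
    (hcoerc : ∀ x : ℕ → ℝ, x 0 = 0 → x (T + 1) = 0 →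
      1 ≤ (∑ k ∈ Finset.Icc 1 (T + 1), (x k - x (k - 1)) ^ 2) ^ ((1 : ℝ) / 2) →
      C₁ * ((∑ k ∈ Finset.Icc 1 (T + 1), (x k - x (k - 1)) ^ 2) ^ ((1 : ℝ) / 2)) ^ pm - C₂ ≤
        ∑ k ∈ Finset.Icc 1 (T + 1), |x k - x (k - 1)| ^ p (k - 1))
    (cQ : ℝ) (hcQpos : 0 < cQ)
    (hcQ : ∀ x : ℕ → ℝ, x 0 = 0 → x (T + 1) = 0 →
      ∑ k ∈ Finset.Icc 1 T, |x k| ^ (qP + 1) ≤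
        cQ * ∑ k ∈ Finset.Icc 1 (T + 1), |x k - x (k - 1)| ^ (qP + 1))
    (lam : ℝ) (hlam0 : 0 < lam)
    (hexp : qP + 1 < pm ∨ (pm = qP + 1 ∧ lam < C₁ * hm * (qm + 1) / (pP * aP * cQ)))
    -- H3
    (hH3 : ∃ k₀ ∈ Finset.Icc 1 T, ∀ v : ℝ, f k₀ 0 v ≠ 0)
    (u : ℕ → ℕ → ℝ) (x : ℕ → ℕ → ℝ)
    (hsol : ∀ n : ℕ,
      x n 0 = 0 ∧ x n (T + 1) = 0 ∧ (∀ k, T + 1 < k → x n k = 0) ∧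
      ∀ k ∈ Finset.Icc 1 T,
        -(h k * |x n (k + 1) - x n k| ^ (p k - 2) * (x n (k + 1) - x n k) -
            h (k - 1) * |x n k - x n (k - 1)| ^ (p (k - 1) - 2) * (x n k - x n (k - 1))) =
          lam * f k (x n k) (u n k)) :
    ∃ γ : ℝ, 0 < γ ∧ ∀ n : ℕ,
      (∑ k ∈ Finset.Icc 1 (T + 1), (x n k - x n (k - 1)) ^ 2) ^ ((1 : ℝ) / 2) ≤ γ := by
  show ∃ γ : ℝ, 0 < γ ∧ ∀ n : ℕ, NN13 T (x n) ≤ γ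
  -- basic facts about the exponents and constants
  have h1T : (1 : ℕ) ∈ Finset.Icc 1 T := by simp [hT]
  have h0T : (0 : ℕ) ∈ Finset.Icc 0 T := by simp
  have hhm_pos : 0 < hm := by rw [hhm, Finset.lt_inf'_iff]; exact hh
  have hpm1 : 1 < pm := by rw [hpm, Finset.lt_inf'_iff]; exact hp
  have hqm1 : 1 < qm := by rw [hqm, Finset.lt_inf'_iff]; exact hq
  have haP0 : 0 ≤ aP := haP ▸ le_trans (ha 1 h1T) (Finset.le_sup' a h1T)
  have hqP1 : 1 < qP := hqP ▸ lt_of_lt_of_le (hq 1 h1T) (Finset.le_sup' q h1T)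
  have hqmqP : qm ≤ qP := by
    rw [hqm, hqP]
    exact le_trans (Finset.inf'_le q h1T) (Finset.le_sup' q h1T)
  have hpmpP : pm ≤ pP := by
    rw [hpm, hpP]
    exact le_trans (Finset.inf'_le p h0T) (Finset.le_sup' p h0T)
  set B : ℝ := ∑ k ∈ Finset.Icc 1 T, b k with hBdef
  have hB0 : 0 ≤ B := Finset.sum_nonneg hb
  set K : ℝ := Real.sqrt (T + 1) with hKdef
  have hK0 : 0 ≤ K := Real.sqrt_nonneg _
  -- Abel summation identity
  have habel : ∀ n, ∑ k ∈ Finset.Icc 1 (T + 1), h (k - 1) * |x n k - x n (k - 1)| ^ p (k - 1)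
      = lam * ∑ j ∈ Finset.range T, f (j + 1) (x n (j + 1)) (u n (j + 1)) * x n (j + 1) := by
    intro n
    obtain ⟨hx0, hxT, -, heq⟩ := hsol n
    set φ : ℕ → ℝ := fun j => h j * |x n (j + 1) - x n j| ^ (p j - 2) * (x n (j + 1) - x n j)
      with hφ
    have step1 : ∑ k ∈ Finset.Icc 1 (T + 1), h (k - 1) * |x n k - x n (k - 1)| ^ p (k - 1)
        = ∑ j ∈ Finset.range (T + 1), φ j * (x n (j + 1) - x n j) := by
      rw [sum_shift13]
      refine Finset.sum_congr rfl fun j hj => ?_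
      have hpj : 1 < p j := hp j (by
        simp only [Finset.mem_range] at hj; simp only [Finset.mem_Icc]; omega)
      have key := abs_rpow_self13 (x n (j + 1) - x n j) (p j) (by linarith)
      simp only [Nat.add_sub_cancel, hφ]
      rw [← key]; ring
    have step2 : ∀ j ∈ Finset.range T,
        φ j - φ (j + 1) = lam * f (j + 1) (x n (j + 1)) (u n (j + 1)) := by
      intro j hj
      have hk : j + 1 ∈ Finset.Icc 1 T := by
        simp only [Finset.mem_range] at hj; simp only [Finset.mem_Icc]; omega
      have hkey := heq (j + 1) hk
      simp only [Nat.add_sub_cancel] at hkey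
      simp only [hφ]
      linarith [hkey]
    rw [step1, abel_sum13 T φ (x n) hx0 hxT, Finset.mul_sum]
    exact Finset.sum_congr rfl fun j hj => by rw [step2 j hj]; ring
  -- the main inequality, for solutions with norm at least one
  have main : ∀ n, 1 ≤ NN13 T (x n) →
      hm * C₁ * (NN13 T (x n)) ^ pm
        ≤ (lam * aP * cQ) * (NN13 T (x n)) ^ (qP + 1) + (hm * C₂ + lam * aP * T)
          + (lam * B * K) * NN13 T (x n) := by
    intro n h1
    obtain ⟨hx0, hxT, -, -⟩ := hsol n
    have hN0 : 0 ≤ NN13 T (x n) := NN13_nonneg T (x n)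
    have hc : C₁ * (NN13 T (x n)) ^ pm - C₂
        ≤ ∑ k ∈ Finset.Icc 1 (T + 1), |x n k - x n (k - 1)| ^ p (k - 1) :=
      hcoerc (x n) hx0 hxT h1
    have hlow : hm * (C₁ * (NN13 T (x n)) ^ pm - C₂)
        ≤ ∑ k ∈ Finset.Icc 1 (T + 1), h (k - 1) * |x n k - x n (k - 1)| ^ p (k - 1) := by
      calc hm * (C₁ * (NN13 T (x n)) ^ pm - C₂)
          ≤ hm * ∑ k ∈ Finset.Icc 1 (T + 1), |x n k - x n (k - 1)| ^ p (k - 1) :=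
            mul_le_mul_of_nonneg_left hc hhm_pos.le
        _ = ∑ k ∈ Finset.Icc 1 (T + 1), hm * |x n k - x n (k - 1)| ^ p (k - 1) :=
            Finset.mul_sum _ _ _
        _ ≤ _ := by
            refine Finset.sum_le_sum fun k hk => ?_
            have hmem : k - 1 ∈ Finset.Icc 0 T := by
              simp only [Finset.mem_Icc] at hk ⊢; omega
            exact mul_le_mul_of_nonneg_right (hhm ▸ Finset.inf'_le h hmem)
              (Real.rpow_nonneg (abs_nonneg _) _)
    have hterm : ∀ j ∈ Finset.range T,
        f (j + 1) (x n (j + 1)) (u n (j + 1)) * x n (j + 1)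
          ≤ aP * |x n (j + 1)| ^ (qP + 1) + aP + b (j + 1) * (K * NN13 T (x n)) := by
      intro j hj
      have hk : j + 1 ∈ Finset.Icc 1 T := by
        simp only [Finset.mem_range] at hj; simp only [Finset.mem_Icc]; omega
      have hq1 : 1 < q (j + 1) := hq _ hk
      have hfb := hgrowth _ hk (x n (j + 1)) (u n (j + 1))
      have habs : |x n (j + 1)| ≤ K * NN13 T (x n) := by
        rw [hKdef]
        exact abs_le_NN13 T (x n) hx0 (j + 1)
          (by simp only [Finset.mem_range] at hj; omega)
      have h1' : f (j + 1) (x n (j + 1)) (u n (j + 1)) * x n (j + 1)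
          ≤ |f (j + 1) (x n (j + 1)) (u n (j + 1))| * |x n (j + 1)| := by
        calc f (j + 1) (x n (j + 1)) (u n (j + 1)) * x n (j + 1)
            ≤ |f (j + 1) (x n (j + 1)) (u n (j + 1)) * x n (j + 1)| := le_abs_self _
          _ = _ := abs_mul _ _
      have h2' : |f (j + 1) (x n (j + 1)) (u n (j + 1))| * |x n (j + 1)|
          ≤ (a (j + 1) * |x n (j + 1)| ^ q (j + 1) + b (j + 1)) * |x n (j + 1)| :=
        mul_le_mul_of_nonneg_right hfb (abs_nonneg _)
      have hring : (a (j + 1) * |x n (j + 1)| ^ q (j + 1) + b (j + 1)) * |x n (j + 1)|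
          = a (j + 1) * (|x n (j + 1)| ^ q (j + 1) * |x n (j + 1)|)
            + b (j + 1) * |x n (j + 1)| := by ring
      have h3' : |x n (j + 1)| ^ q (j + 1) * |x n (j + 1)|
          = |x n (j + 1)| ^ (q (j + 1) + 1) :=
        abs_rpow_mul_self13 _ _ (by linarith)
      have h4' : |x n (j + 1)| ^ (q (j + 1) + 1) ≤ |x n (j + 1)| ^ (qP + 1) + 1 := by
        rcases le_or_gt (|x n (j + 1)|) 1 with hle | hlt
        · have hle1 := Real.rpow_le_one (abs_nonneg _) hle
            (by linarith : (0:ℝ) ≤ q (j + 1) + 1)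
          have h0 : 0 ≤ |x n (j + 1)| ^ (qP + 1) := Real.rpow_nonneg (abs_nonneg _) _
          linarith
        · have hqle : q (j + 1) + 1 ≤ qP + 1 := by
            have := hqP ▸ Finset.le_sup' q hk
            linarith
          have := Real.rpow_le_rpow_of_exponent_le hlt.le hqle
          linarith
      have haj : a (j + 1) ≤ aP := haP ▸ Finset.le_sup' a hk
      have haj0 : 0 ≤ a (j + 1) := ha _ hk
      have hbj0 : 0 ≤ b (j + 1) := hb _ hk
      have h5' : a (j + 1) * (|x n (j + 1)| ^ q (j + 1) * |x n (j + 1)|)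
          ≤ aP * (|x n (j + 1)| ^ (qP + 1) + 1) := by
        rw [h3']
        refine mul_le_mul haj h4' (Real.rpow_nonneg (abs_nonneg _) _) haP0
      have h6' : b (j + 1) * |x n (j + 1)| ≤ b (j + 1) * (K * NN13 T (x n)) :=
        mul_le_mul_of_nonneg_left habs hbj0
      have hsplit : aP * (|x n (j + 1)| ^ (qP + 1) + 1)
          = aP * |x n (j + 1)| ^ (qP + 1) + aP := by ring
      linarith [h1'.trans h2']
    have hsum : ∑ j ∈ Finset.range T, f (j + 1) (x n (j + 1)) (u n (j + 1)) * x n (j + 1)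
        ≤ aP * (cQ * (NN13 T (x n)) ^ (qP + 1)) + aP * T + B * (K * NN13 T (x n)) := by
      have hstep : ∑ j ∈ Finset.range T, f (j + 1) (x n (j + 1)) (u n (j + 1)) * x n (j + 1)
          ≤ ∑ j ∈ Finset.range T,
              (aP * |x n (j + 1)| ^ (qP + 1) + aP + b (j + 1) * (K * NN13 T (x n))) :=
        Finset.sum_le_sum hterm
      have hsplitsum : ∑ j ∈ Finset.range T,
            (aP * |x n (j + 1)| ^ (qP + 1) + aP + b (j + 1) * (K * NN13 T (x n)))
          = aP * ∑ j ∈ Finset.range T, |x n (j + 1)| ^ (qP + 1) + aP * T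
            + B * (K * NN13 T (x n)) := by
        rw [Finset.sum_add_distrib, Finset.sum_add_distrib, ← Finset.mul_sum,
          Finset.sum_const, Finset.card_range, ← Finset.sum_mul, hBdef, sum_shift13 T b]
        simp only [nsmul_eq_mul]
        ring
      have hq2 : (2 : ℝ) ≤ qP + 1 := by linarith
      have hXq : ∑ j ∈ Finset.range T, |x n (j + 1)| ^ (qP + 1)
          ≤ cQ * (NN13 T (x n)) ^ (qP + 1) := by
        rw [← sum_shift13 T (fun k => |x n k| ^ (qP + 1))]
        calc ∑ k ∈ Finset.Icc 1 T, |x n k| ^ (qP + 1)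
            ≤ cQ * ∑ k ∈ Finset.Icc 1 (T + 1), |x n k - x n (k - 1)| ^ (qP + 1) :=
              hcQ (x n) hx0 hxT
          _ ≤ cQ * (NN13 T (x n)) ^ (qP + 1) :=
              mul_le_mul_of_nonneg_left (sum_abs_rpow_le_NN13 T (x n) _ hq2) hcQpos.le
      have := mul_le_mul_of_nonneg_left hXq haP0
      linarith [hstep.trans_eq hsplitsum]
    have hfinal := mul_le_mul_of_nonneg_left hsum hlam0.le
    rw [← habel n] at hfinal
    have hexpand : lam * (aP * (cQ * (NN13 T (x n)) ^ (qP + 1)) + aP * T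
          + B * (K * NN13 T (x n)))
        = (lam * aP * cQ) * (NN13 T (x n)) ^ (qP + 1) + lam * aP * T
          + (lam * B * K) * NN13 T (x n) := by ring
    rw [hexpand] at hfinal
    linarith
  -- conclusion: case analysis on the exponent condition
  set G : ℝ := lam * aP * cQ with hGdef
  set D : ℝ := hm * C₂ + lam * aP * T with hDdef
  set E : ℝ := lam * B * K with hEdef
  have hG0 : 0 ≤ G := by
    rw [hGdef]
    exact mul_nonneg (mul_nonneg hlam0.le haP0) hcQpos.le
  have hD0 : 0 ≤ D := by
    rw [hDdef]
    have : (0:ℝ) ≤ lam * aP * T :=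
      mul_nonneg (mul_nonneg hlam0.le haP0) (Nat.cast_nonneg T)
    nlinarith [mul_pos hhm_pos hC₂]
  have hE0 : 0 ≤ E := by
    rw [hEdef]
    exact mul_nonneg (mul_nonneg hlam0.le hB0) hK0
  rcases hexp with hcase | ⟨hpmeq, hlam⟩
  · -- subcritical case
    have hδ0 : 0 < pm - (qP + 1) := by linarith
    refine ⟨max 1 (((G + D + E) / (hm * C₁)) ^ (1 / (pm - (qP + 1)))),
      lt_of_lt_of_le one_pos (le_max_left _ _), fun n => ?_⟩
    show NN13 T (x n) ≤ _
    rcases le_or_gt 1 (NN13 T (x n)) with h1 | h1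
    · have hkey := main n h1
      set N : ℝ := NN13 T (x n) with hNdef
      have hNpos : 0 < N := lt_of_lt_of_le one_pos h1
      have hq10 : (1:ℝ) ≤ qP + 1 := by linarith
      have hN1q : 1 ≤ N ^ (qP + 1) := Real.one_le_rpow h1 (by linarith)
      have hNq0 : 0 < N ^ (qP + 1) := lt_of_lt_of_le one_pos hN1q
      have hNN : N ≤ N ^ (qP + 1) := by
        nth_rewrite 1 [← Real.rpow_one N]
        exact Real.rpow_le_rpow_of_exponent_le h1 hq10
      have hsplitN : N ^ pm = N ^ (qP + 1) * N ^ (pm - (qP + 1)) := by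
        rw [← Real.rpow_add hNpos]
        congr 1
        ring
      have hstep2 : hm * C₁ * N ^ (pm - (qP + 1)) * N ^ (qP + 1)
          ≤ (G + D + E) * N ^ (qP + 1) := by
        have hG' : G * N ^ (qP + 1) ≤ G * N ^ (qP + 1) := le_refl _
        have hDle : D ≤ D * N ^ (qP + 1) := le_mul_of_one_le_right hD0 hN1q
        have hEle : E * N ≤ E * N ^ (qP + 1) := mul_le_mul_of_nonneg_left hNN hE0
        calc hm * C₁ * N ^ (pm - (qP + 1)) * N ^ (qP + 1)
            = hm * C₁ * N ^ pm := by rw [hsplitN]; ring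
          _ ≤ G * N ^ (qP + 1) + D + E * N := hkey
          _ ≤ (G + D + E) * N ^ (qP + 1) := by linarith
      have hdiv : hm * C₁ * N ^ (pm - (qP + 1)) ≤ G + D + E :=
        le_of_mul_le_mul_right hstep2 hNq0
      have hC : 0 < hm * C₁ := mul_pos hhm_pos hC₁
      have hfin : N ^ (pm - (qP + 1)) ≤ (G + D + E) / (hm * C₁) := by
        rw [le_div_iff₀ hC]
        linarith
      have hNle : N ≤ ((G + D + E) / (hm * C₁)) ^ (1 / (pm - (qP + 1))) := by
        have hid : (N ^ (pm - (qP + 1))) ^ (1 / (pm - (qP + 1))) = N := by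
          rw [← Real.rpow_mul hNpos.le, mul_one_div, div_self hδ0.ne', Real.rpow_one]
        rw [← hid]
        exact Real.rpow_le_rpow (Real.rpow_nonneg hNpos.le _) hfin (by positivity)
      exact hNle.trans (le_max_right _ _)
    · exact h1.le.trans (le_max_left _ _)
  · -- critical case
    have hGlt : G < hm * C₁ := by
      rcases eq_or_lt_of_le haP0 with h0 | haPpos
      · rw [hGdef, ← h0]
        simpa using mul_pos hhm_pos hC₁
      · have hpP0 : 0 < pP := by linarith
        have hden : 0 < pP * aP * cQ := mul_pos (mul_pos hpP0 haPpos) hcQpos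
        rw [lt_div_iff₀ hden] at hlam
        have hqppP : qm + 1 ≤ pP := by linarith
        have h2 : G * pP < hm * C₁ * pP := by
          rw [hGdef]
          nlinarith [mul_pos hhm_pos hC₁]
        exact lt_of_mul_lt_mul_right h2 hpP0.le
    have hε : 0 < hm * C₁ - G := by linarith
    refine ⟨max 1 ((D + E) / (hm * C₁ - G)),
      lt_of_lt_of_le one_pos (le_max_left _ _), fun n => ?_⟩
    show NN13 T (x n) ≤ _
    rcases le_or_gt 1 (NN13 T (x n)) with h1 | h1
    · have hkey := main n h1
      set N : ℝ := NN13 T (x n) with hNdef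
      have hNpos : 0 < N := lt_of_lt_of_le one_pos h1
      rw [← hpmeq] at hkey
      have hpm2 : 2 ≤ pm := by rw [hpmeq]; linarith
      have hN2 : N * N ≤ N ^ pm := by
        have : N * N = N ^ (2:ℝ) := by
          rw [Real.rpow_two]; ring
        rw [this]
        exact Real.rpow_le_rpow_of_exponent_le h1 hpm2
      have hstep2 : (hm * C₁ - G) * (N * N) ≤ (D + E) * N := by
        have h3 : (hm * C₁ - G) * N ^ pm ≤ D + E * N := by linarith
        have h4 : (hm * C₁ - G) * (N * N) ≤ (hm * C₁ - G) * N ^ pm :=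
          mul_le_mul_of_nonneg_left hN2 hε.le
        have h5 : D ≤ D * N := le_mul_of_one_le_right hD0 h1
        linarith
      have hdiv : (hm * C₁ - G) * N ≤ D + E := by
        have : (hm * C₁ - G) * N * N ≤ (D + E) * N := by
          calc (hm * C₁ - G) * N * N = (hm * C₁ - G) * (N * N) := by ring
            _ ≤ (D + E) * N := hstep2
        exact le_of_mul_le_mul_right this hNpos
      have hNle : N ≤ (D + E) / (hm * C₁ - G) := by
        rw [le_div_iff₀ hε]
        linarith
      exact hNle.trans (le_max_right _ _)
    · exact h1.le.trans (le_max_left _ _)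
end

section
/- Assume H1, H2, H3 and the exponent/λ conditions of the main theorem. Let {u_n} be a sequence of parameter functions with u_n(k) → ū(k) for each k ∈ {1,...,T}, and let x_{u_n} denote the unique solution corresponding to u_n. Then there exists a subsequence {x_{u_{n_i}}} converging (pointwise on the finite discrete interval) to a function x̄ which solves the problem with parameter ū: −Δ(h(k-1)|Δx̄(k-1)|^{p(k-1)-2}Δx̄(k-1)) = λf(k,x̄(k),ū(k)) for k ∈ {1,...,T}, x̄(0) = x̄(T+1) = 0. -/
set_option maxHeartbeats 1000000
open Finset Filter

lemma my_abel (A X : ℕ → ℝ) : ∀ n : ℕ,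
    ∑ i ∈ Finset.range n, A i * (X (i+1) - X i) =
      (∑ i ∈ Finset.range n, (A i - A (i+1)) * X (i+1)) + A n * X n - A 0 * X 0 := by
  intro n
  induction n with
  | zero => simp
  | succ n ih => rw [Finset.sum_range_succ, ih, Finset.sum_range_succ]; ring

lemma my_tel (X : ℕ → ℝ) : ∀ k : ℕ, X k = X 0 + ∑ j ∈ Finset.Icc 1 k, (X j - X (j-1)) := by
  intro k
  induction k with
  | zero => simp
  | succ k ih =>
    rw [Finset.sum_Icc_succ_top (Nat.le_add_left 1 k), ← add_assoc, ← ih]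
    simp

lemma my_icc_range (F : ℕ → ℝ) (n : ℕ) :
    ∑ k ∈ Finset.Icc 1 n, F k = ∑ i ∈ Finset.range n, F (i+1) := by
  rw [← Finset.Ico_add_one_right_eq_Icc, Finset.sum_Ico_eq_sum_range]
  simp [Nat.add_comm]

lemma my_rpow_sq (t : ℝ) (r : ℝ) (hr : r ≠ 0) : |t| ^ r = (t^2) ^ (r/2) := by
  rw [← sq_abs, ← Real.rpow_natCast |t| 2, ← Real.rpow_mul (abs_nonneg t)]
  congr 1; ring

lemma my_lr (s : Finset ℕ) (d : ℕ → ℝ) (r : ℝ) (hr : 2 ≤ r) :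
    ∑ k ∈ s, |d k| ^ r ≤ (∑ k ∈ s, (d k)^2) ^ (r/2) := by
  set S : ℝ := ∑ k ∈ s, (d k)^2 with hS
  have hS0 : 0 ≤ S := Finset.sum_nonneg fun k _ => sq_nonneg _
  have key : ∀ k ∈ s, |d k| ^ r ≤ (d k)^2 * S ^ (r/2 - 1) := by
    intro k hk
    have hle : (d k)^2 ≤ S := Finset.single_le_sum (fun k _ => sq_nonneg (d k)) hk
    rw [my_rpow_sq _ _ (by linarith)]
    rcases eq_or_ne (d k) 0 with h0 | h0
    · rw [h0]; simp [Real.zero_rpow (show r/2 ≠ 0 by intro hh; rw [div_eq_iff (by norm_num : (2:ℝ) ≠ 0)] at hh; linarith)]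
    · have hd2 : (0:ℝ) < (d k)^2 := by positivity
      calc ((d k)^2) ^ (r/2) = (d k)^2 * ((d k)^2) ^ (r/2 - 1) := by
            rw [show r/2 = 1 + (r/2 - 1) by ring, Real.rpow_add hd2, Real.rpow_one]
            congr 2; ring
        _ ≤ (d k)^2 * S ^ (r/2 - 1) := by
            apply mul_le_mul_of_nonneg_left _ (le_of_lt hd2)
            exact Real.rpow_le_rpow (le_of_lt hd2) hle (by linarith)
  calc ∑ k ∈ s, |d k| ^ r ≤ ∑ k ∈ s, (d k)^2 * S ^ (r/2 - 1) := Finset.sum_le_sum key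
    _ = S * S ^ (r/2-1) := by rw [← Finset.sum_mul]
    _ = S ^ (r/2) := by
        rcases eq_or_lt_of_le hS0 with h | h
        · rw [← h, Real.zero_rpow (show r/2 ≠ 0 by intro hh; rw [div_eq_iff (by norm_num : (2:ℝ) ≠ 0)] at hh; linarith)]
          ring
        · rw [show r/2 = 1 + (r/2 - 1) by ring, Real.rpow_add h, Real.rpow_one]
          congr 2; ring

lemma my_tendsto_g (c : ℝ) (hc : -1 < c) (y : ℕ → ℝ) (L : ℝ)
    (hy : Tendsto y atTop (nhds L)) :
    Tendsto (fun i => |y i| ^ c * y i) atTop (nhds (|L| ^ c * L)) := by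
  rcases eq_or_ne L 0 with hL | hL
  · subst hL
    have h0 : |(0:ℝ)| ^ c * (0:ℝ) = 0 := by ring
    rw [h0]
    rw [tendsto_zero_iff_abs_tendsto_zero]
    have heq : (abs ∘ fun i => |y i| ^ c * y i) = fun i => |y i| ^ (c + 1) := by
      funext i
      simp only [Function.comp_apply, abs_mul]
      rcases eq_or_ne (y i) 0 with h0' | h0'
      · simp [h0', Real.zero_rpow (show c + 1 ≠ 0 by linarith)]
      · rw [abs_of_nonneg (Real.rpow_nonneg (abs_nonneg _) c),
          show c + 1 = c + 1 by rfl, Real.rpow_add (abs_pos.mpr h0'), Real.rpow_one]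
    rw [heq]
    have : Tendsto (fun i => |y i|) atTop (nhds (0:ℝ)) := by
      have := hy.abs; simpa using this
    have hcont : ContinuousAt (fun t : ℝ => t ^ (c+1)) 0 :=
      Real.continuousAt_rpow_const 0 (c+1) (Or.inr (by linarith))
    have := hcont.tendsto.comp this
    simpa [Function.comp_def, Real.zero_rpow (show c + 1 ≠ 0 by linarith)] using this
  · have hcont : ContinuousAt (fun t : ℝ => |t| ^ c * t) L := by
      apply ContinuousAt.mul _ continuousAt_id
      exact (continuous_abs.continuousAt).rpow_const (Or.inl (abs_ne_zero.mpr hL))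
    exact hcont.tendsto.comp hy
lemma my_pow_id (t c : ℝ) (hc : 0 < c) : |t| ^ (c - 2) * t * t = |t| ^ c := by
  rcases eq_or_ne t 0 with h0 | h0
  · rw [h0]; simp [Real.zero_rpow (ne_of_gt hc)]
  · have habs : 0 < |t| := abs_pos.mpr h0
    have ht2 : t * t = |t| ^ (2:ℝ) := by
      rw [show |t| ^ (2:ℝ) = |t| ^ (2:ℕ) from Real.rpow_natCast |t| 2, sq_abs]; ring
    rw [mul_assoc, ht2, ← Real.rpow_add habs]
    congr 1; ring

lemma my_mul_abs (t c : ℝ) (hc : 0 < c) : |t| ^ c * |t| = |t| ^ (c + 1) := by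
  rcases eq_or_ne t 0 with h0 | h0
  · rw [h0]; simp [Real.zero_rpow (by linarith : c + 1 ≠ 0)]
  · have habs : 0 < |t| := abs_pos.mpr h0
    rw [Real.rpow_add habs, Real.rpow_one]

lemma my_one_add (t r s : ℝ) (h0 : 0 ≤ t) (h1 : 0 ≤ r) (h2 : r ≤ s) :
    t ^ r ≤ 1 + t ^ s := by
  have hs0 : 0 ≤ t ^ s := Real.rpow_nonneg h0 s
  rcases le_or_gt t 1 with h | h
  · have := Real.rpow_le_one h0 h h1
    linarith
  · have := Real.rpow_le_rpow_of_exponent_le (le_of_lt h) h2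
    linarith



open Finset

theorem stmt14 (T : ℕ) (hT : 1 ≤ T)
    (h p : ℕ → ℝ) (hh : ∀ k ∈ Finset.Icc 0 T, 0 < h k) (hp : ∀ k ∈ Finset.Icc 0 T, 1 < p k)
    (hm pm pP : ℝ)
    (hhm : hm = (Finset.Icc 0 T).inf' (Finset.nonempty_Icc.mpr (Nat.zero_le T)) h)
    (hpm : pm = (Finset.Icc 0 T).inf' (Finset.nonempty_Icc.mpr (Nat.zero_le T)) p)
    (hpP : pP = (Finset.Icc 0 T).sup' (Finset.nonempty_Icc.mpr (Nat.zero_le T)) p)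
    (f : ℕ → ℝ → ℝ → ℝ) (hcont : ∀ k, Continuous fun pr : ℝ × ℝ => f k pr.1 pr.2)
    -- H1
    (a b q : ℕ → ℝ)
    (ha : ∀ k ∈ Finset.Icc 1 T, 0 ≤ a k) (hb : ∀ k ∈ Finset.Icc 1 T, 0 ≤ b k)
    (hq : ∀ k ∈ Finset.Icc 1 T, 1 < q k)
    (hgrowth : ∀ k ∈ Finset.Icc 1 T, ∀ t v : ℝ, |f k t v| ≤ a k * |t| ^ q k + b k)
    -- H2
    (hantitone : ∀ k ∈ Finset.Icc 1 T, ∀ v : ℝ, Antitone fun t => f k t v)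
    (aP qP qm : ℝ)
    (haP : aP = (Finset.Icc 1 T).sup' (Finset.nonempty_Icc.mpr hT) a)
    (hqP : qP = (Finset.Icc 1 T).sup' (Finset.nonempty_Icc.mpr hT) q)
    (hqm : qm = (Finset.Icc 1 T).inf' (Finset.nonempty_Icc.mpr hT) q)
    (C₁ C₂ : ℝ) (hC₁ : 0 < C₁) (hC₂ : 0 < C₂)
    (hcoerc : ∀ x : ℕ → ℝ, x 0 = 0 → x (T + 1) = 0 →
      1 ≤ (∑ k ∈ Finset.Icc 1 (T + 1), (x k - x (k - 1)) ^ 2) ^ ((1 : ℝ) / 2) →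
      C₁ * ((∑ k ∈ Finset.Icc 1 (T + 1), (x k - x (k - 1)) ^ 2) ^ ((1 : ℝ) / 2)) ^ pm - C₂ ≤
        ∑ k ∈ Finset.Icc 1 (T + 1), |x k - x (k - 1)| ^ p (k - 1))
    (cQ : ℝ) (hcQpos : 0 < cQ)
    (hcQ : ∀ x : ℕ → ℝ, x 0 = 0 → x (T + 1) = 0 →
      ∑ k ∈ Finset.Icc 1 T, |x k| ^ (qP + 1) ≤
        cQ * ∑ k ∈ Finset.Icc 1 (T + 1), |x k - x (k - 1)| ^ (qP + 1))
    (lam : ℝ) (hlam0 : 0 < lam)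
    (hexp : qP + 1 < pm ∨ (pm = qP + 1 ∧ lam < C₁ * hm * (qm + 1) / (pP * aP * cQ)))
    -- H3
    (hH3 : ∃ k₀ ∈ Finset.Icc 1 T, ∀ v : ℝ, f k₀ 0 v ≠ 0)
    (u : ℕ → ℕ → ℝ) (ubar : ℕ → ℝ)
    (huconv : ∀ k ∈ Finset.Icc 1 T,
      Filter.Tendsto (fun n => u n k) Filter.atTop (nhds (ubar k)))
    (x : ℕ → ℕ → ℝ)
    (hsol : ∀ n : ℕ,
      x n 0 = 0 ∧ x n (T + 1) = 0 ∧ (∀ k, T + 1 < k → x n k = 0) ∧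
      ∀ k ∈ Finset.Icc 1 T,
        -(h k * |x n (k + 1) - x n k| ^ (p k - 2) * (x n (k + 1) - x n k) -
            h (k - 1) * |x n k - x n (k - 1)| ^ (p (k - 1) - 2) * (x n k - x n (k - 1))) =
          lam * f k (x n k) (u n k)) :
    ∃ φ : ℕ → ℕ, StrictMono φ ∧ ∃ xbar : ℕ → ℝ,
      (∀ k ≤ T + 1, Filter.Tendsto (fun i => x (φ i) k) Filter.atTop (nhds (xbar k))) ∧
      xbar 0 = 0 ∧ xbar (T + 1) = 0 ∧ (∀ k, T + 1 < k → xbar k = 0) ∧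
      ∀ k ∈ Finset.Icc 1 T,
        -(h k * |xbar (k + 1) - xbar k| ^ (p k - 2) * (xbar (k + 1) - xbar k) -
            h (k - 1) * |xbar k - xbar (k - 1)| ^ (p (k - 1) - 2) * (xbar k - xbar (k - 1))) =
          lam * f k (xbar k) (ubar k) := by
  classical
  have hx0 : ∀ n, x n 0 = 0 := fun n => (hsol n).1
  have hxT : ∀ n, x n (T+1) = 0 := fun n => (hsol n).2.1
  have hxgt : ∀ n, ∀ k, T+1 < k → x n k = 0 := fun n => (hsol n).2.2.1
  have heqn : ∀ n, ∀ k ∈ Finset.Icc 1 T,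
      -(h k * |x n (k + 1) - x n k| ^ (p k - 2) * (x n (k + 1) - x n k) -
          h (k - 1) * |x n k - x n (k - 1)| ^ (p (k - 1) - 2) * (x n k - x n (k - 1))) =
        lam * f k (x n k) (u n k) := fun n => (hsol n).2.2.2
  -- scalar facts
  have h1T : (1:ℕ) ∈ Finset.Icc 1 T := Finset.mem_Icc.mpr ⟨le_refl 1, hT⟩
  have h0T : (0:ℕ) ∈ Finset.Icc 0 T := Finset.mem_Icc.mpr ⟨le_refl 0, Nat.zero_le T⟩
  have hmpos : 0 < hm := by rw [hhm, Finset.lt_inf'_iff]; exact hh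
  have hpm1 : 1 < pm := by rw [hpm, Finset.lt_inf'_iff]; exact hp
  have hqm1 : 1 < qm := by rw [hqm, Finset.lt_inf'_iff]; exact hq
  have haP0 : 0 ≤ aP := le_trans (ha 1 h1T) (haP ▸ Finset.le_sup' a h1T)
  have hqP1 : 1 < qP := lt_of_lt_of_le (hq 1 h1T) (hqP ▸ Finset.le_sup' q h1T)
  have hqmqP : qm ≤ qP :=
    le_trans (hqm ▸ Finset.inf'_le q h1T) (hqP ▸ Finset.le_sup' q h1T)
  have hpmpP : pm ≤ pP :=
    le_trans (hpm ▸ Finset.inf'_le p h0T) (hpP ▸ Finset.le_sup' p h0T)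
  have h2pm : 2 < pm := by rcases hexp with hc | ⟨hc, _⟩ <;> linarith
  set B : ℝ := ∑ k ∈ Finset.Icc 1 T, b k with hBdef
  have hB0 : 0 ≤ B := Finset.sum_nonneg hb
  set S : ℕ → ℝ := fun n => ∑ k ∈ Finset.Icc 1 (T+1), (x n k - x n (k-1))^2 with hSdef
  have hS0 : ∀ n, 0 ≤ S n := fun n => Finset.sum_nonneg fun k _ => sq_nonneg _
  -- telescope bound
  have habs : ∀ n, ∀ k, k ≤ T+1 → |x n k| ≤ (T+1 : ℝ) + S n := by
    intro n k hk
    have h1 : x n k = ∑ j ∈ Finset.Icc 1 k, (x n j - x n (j-1)) := by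
      have := my_tel (x n) k
      rw [hx0 n] at this
      simpa using this
    calc |x n k| ≤ ∑ j ∈ Finset.Icc 1 k, |x n j - x n (j-1)| := by
          rw [h1]; exact Finset.abs_sum_le_sum_abs _ _
      _ ≤ ∑ j ∈ Finset.Icc 1 (T+1), |x n j - x n (j-1)| :=
          Finset.sum_le_sum_of_subset_of_nonneg
            (Finset.Icc_subset_Icc_right hk) (fun _ _ _ => abs_nonneg _)
      _ ≤ ∑ j ∈ Finset.Icc 1 (T+1), (1 + (x n j - x n (j-1))^2) :=
          Finset.sum_le_sum (fun j _ => by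
            nlinarith [sq_nonneg (|x n j - x n (j-1)| - 1), sq_abs (x n j - x n (j-1)),
              abs_nonneg (x n j - x n (j-1))])
      _ = (T+1 : ℝ) + S n := by
          rw [Finset.sum_add_distrib, Finset.sum_const, Nat.card_Icc]
          simp [hSdef]
  -- energy identity
  have energy : ∀ n,
      ∑ k ∈ Finset.Icc 1 (T+1),
        h (k-1) * |x n k - x n (k-1)| ^ (p (k-1) - 2) * (x n k - x n (k-1)) * (x n k - x n (k-1)) =
      ∑ k ∈ Finset.Icc 1 T, (lam * f k (x n k) (u n k)) * x n k := by
    intro n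
    set A : ℕ → ℝ := fun j => h j * |x n (j+1) - x n j| ^ (p j - 2) * (x n (j+1) - x n j) with hAdef
    have step1 : ∑ k ∈ Finset.Icc 1 (T+1),
        h (k-1) * |x n k - x n (k-1)| ^ (p (k-1) - 2) * (x n k - x n (k-1)) * (x n k - x n (k-1)) =
        ∑ k ∈ Finset.Icc 1 (T+1), A (k-1) * (x n k - x n (k-1)) := by
      refine Finset.sum_congr rfl fun k hk => ?_
      have hk1 : 1 ≤ k := (Finset.mem_Icc.mp hk).1
      have hkk : k - 1 + 1 = k := Nat.succ_pred_eq_of_pos hk1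
      simp only [hAdef, hkk]
    have step2 : ∑ k ∈ Finset.Icc 1 (T+1), A (k-1) * (x n k - x n (k-1)) =
        ∑ i ∈ Finset.range (T+1), A i * (x n (i+1) - x n i) := by
      rw [my_icc_range]
      refine Finset.sum_congr rfl fun i _ => ?_
      simp
    have step3 : ∑ i ∈ Finset.range (T+1), A i * (x n (i+1) - x n i) =
        ∑ i ∈ Finset.range (T+1), (A i - A (i+1)) * x n (i+1) := by
      rw [my_abel A (x n) (T+1), hx0 n, hxT n]
      ring
    have step4 : ∑ i ∈ Finset.range (T+1), (A i - A (i+1)) * x n (i+1) =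
        ∑ k ∈ Finset.Icc 1 (T+1), (A (k-1) - A k) * x n k := by
      rw [my_icc_range]
      refine Finset.sum_congr rfl fun i _ => ?_
      simp
    have step5 : ∑ k ∈ Finset.Icc 1 (T+1), (A (k-1) - A k) * x n k =
        ∑ k ∈ Finset.Icc 1 T, (A (k-1) - A k) * x n k := by
      rw [Finset.sum_Icc_succ_top (Nat.le_add_left 1 T), hxT n]
      ring
    rw [step1, step2, step3, step4, step5]
    refine Finset.sum_congr rfl fun k hk => ?_
    have hk1 : 1 ≤ k := (Finset.mem_Icc.mp hk).1
    have hkk : k - 1 + 1 = k := Nat.succ_pred_eq_of_pos hk1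
    have h' := heqn n k hk
    have hA : A (k-1) - A k = lam * f k (x n k) (u n k) := by
      simp only [hAdef, hkk]
      linarith
    rw [hA]
  -- key growth bound
  set K₀ : ℝ := hm*C₂ + lam*aP*T + lam*B*(T+1) with hK₀def
  have hK₀0 : 0 ≤ K₀ := by positivity
  have keybound : ∀ n, 1 ≤ S n →
      hm * C₁ * (S n)^(pm/2) ≤ K₀ + lam*aP*cQ*(S n)^((qP+1)/2) + lam*B*(S n) := by
    intro n ht1
    have htpos : (0:ℝ) < S n := lt_of_lt_of_le one_pos ht1
    -- coercivity
    have hN1 : (1:ℝ) ≤ (S n)^((1:ℝ)/2) := by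
      calc (1:ℝ) = (1:ℝ)^((1:ℝ)/2) := (Real.one_rpow _).symm
        _ ≤ (S n)^((1:ℝ)/2) := Real.rpow_le_rpow zero_le_one ht1 (by norm_num)
    have hco := hcoerc (x n) (hx0 n) (hxT n) hN1
    have hNpm : ((S n)^((1:ℝ)/2))^pm = (S n)^(pm/2) := by
      rw [← Real.rpow_mul (hS0 n)]; congr 1; ring
    rw [hNpm] at hco
    -- lower bound : hm * (C₁ S^{pm/2} - C₂) ≤ E n
    have hlow : hm * (C₁ * (S n)^(pm/2) - C₂) ≤
        ∑ k ∈ Finset.Icc 1 (T+1),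
          h (k-1) * |x n k - x n (k-1)| ^ (p (k-1) - 2) * (x n k - x n (k-1)) * (x n k - x n (k-1)) := by
      have hE : ∑ k ∈ Finset.Icc 1 (T+1),
          h (k-1) * |x n k - x n (k-1)| ^ (p (k-1) - 2) * (x n k - x n (k-1)) * (x n k - x n (k-1)) =
          ∑ k ∈ Finset.Icc 1 (T+1), h (k-1) * |x n k - x n (k-1)| ^ (p (k-1)) := by
        refine Finset.sum_congr rfl fun k hk => ?_
        have hk' := Finset.mem_Icc.mp hk
        have hkm : k - 1 ∈ Finset.Icc 0 T := Finset.mem_Icc.mpr ⟨Nat.zero_le _, by omega⟩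
        have hpk : 0 < p (k-1) := by linarith [hp _ hkm]
        calc h (k-1) * |x n k - x n (k-1)| ^ (p (k-1) - 2) * (x n k - x n (k-1)) * (x n k - x n (k-1))
            = h (k-1) * (|x n k - x n (k-1)| ^ (p (k-1) - 2) * (x n k - x n (k-1)) * (x n k - x n (k-1))) := by ring
          _ = h (k-1) * |x n k - x n (k-1)| ^ (p (k-1)) := by rw [my_pow_id _ _ hpk]
      rw [hE]
      have hstep : ∑ k ∈ Finset.Icc 1 (T+1), hm * |x n k - x n (k-1)| ^ (p (k-1)) ≤
          ∑ k ∈ Finset.Icc 1 (T+1), h (k-1) * |x n k - x n (k-1)| ^ (p (k-1)) := by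
        refine Finset.sum_le_sum fun k hk => ?_
        have hk' := Finset.mem_Icc.mp hk
        have hkm : k - 1 ∈ Finset.Icc 0 T := Finset.mem_Icc.mpr ⟨Nat.zero_le _, by omega⟩
        exact mul_le_mul_of_nonneg_right (hhm ▸ Finset.inf'_le h hkm)
          (Real.rpow_nonneg (abs_nonneg _) _)
      have h2 : hm * (C₁ * (S n)^(pm/2) - C₂) ≤
          hm * ∑ k ∈ Finset.Icc 1 (T+1), |x n k - x n (k-1)| ^ (p (k-1)) :=
        mul_le_mul_of_nonneg_left hco (le_of_lt hmpos)
      rw [Finset.mul_sum] at h2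
      exact le_trans h2 hstep
    -- upper bound on RHS of energy
    have hup : ∑ k ∈ Finset.Icc 1 T, (lam * f k (x n k) (u n k)) * x n k ≤
        lam * (aP * T + aP * cQ * (S n)^((qP+1)/2) + B * ((T+1) + S n)) := by
      have hterm : ∀ k ∈ Finset.Icc 1 T, (lam * f k (x n k) (u n k)) * x n k ≤
          lam * (aP * (1 + |x n k| ^ (qP+1)) + b k * ((T+1) + S n)) := by
        intro k hk
        have hk' := Finset.mem_Icc.mp hk
        have hqk : 1 < q k := hq k hk
        have hxb : |x n k| ≤ (T+1 : ℝ) + S n := habs n k (by omega)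
        have hfb := hgrowth k hk (x n k) (u n k)
        have h1 : (f k (x n k) (u n k)) * x n k ≤ |f k (x n k) (u n k)| * |x n k| := by
          rw [← abs_mul]; exact le_abs_self _
        have h2 : |f k (x n k) (u n k)| * |x n k| ≤
            (a k * |x n k| ^ q k + b k) * |x n k| :=
          mul_le_mul_of_nonneg_right hfb (abs_nonneg _)
        have h3 : (a k * |x n k| ^ q k + b k) * |x n k| =
            a k * |x n k| ^ (q k + 1) + b k * |x n k| := by
          rw [← my_mul_abs _ _ (by linarith : (0:ℝ) < q k)]; ring
        have h4 : a k * |x n k| ^ (q k + 1) ≤ aP * (1 + |x n k| ^ (qP+1)) := by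
          have hq4 : q k ≤ qP := hqP ▸ Finset.le_sup' q hk
          have h5 := my_one_add |x n k| (q k + 1) (qP + 1) (abs_nonneg _)
            (by linarith) (by linarith)
          have h6 : a k ≤ aP := haP ▸ Finset.le_sup' a hk
          have h7 : (0:ℝ) ≤ 1 + |x n k| ^ (qP+1) := by positivity
          calc a k * |x n k| ^ (q k + 1) ≤ a k * (1 + |x n k| ^ (qP+1)) :=
                mul_le_mul_of_nonneg_left h5 (ha k hk)
            _ ≤ aP * (1 + |x n k| ^ (qP+1)) := mul_le_mul_of_nonneg_right h6 h7
        have h8 : b k * |x n k| ≤ b k * ((T+1) + S n) :=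
          mul_le_mul_of_nonneg_left hxb (hb k hk)
        have h9 : (f k (x n k) (u n k)) * x n k ≤
            aP * (1 + |x n k| ^ (qP+1)) + b k * ((T+1) + S n) := by linarith
        calc (lam * f k (x n k) (u n k)) * x n k
            = lam * ((f k (x n k) (u n k)) * x n k) := by ring
          _ ≤ lam * (aP * (1 + |x n k| ^ (qP+1)) + b k * ((T+1) + S n)) :=
            mul_le_mul_of_nonneg_left h9 (le_of_lt hlam0)
      have hsum := Finset.sum_le_sum hterm
      have hsplit : ∑ k ∈ Finset.Icc 1 T,
          lam * (aP * (1 + |x n k| ^ (qP+1)) + b k * ((T+1) + S n)) =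
          lam * (aP * T + aP * (∑ k ∈ Finset.Icc 1 T, |x n k| ^ (qP+1)) + B * ((T+1) + S n)) := by
        rw [hBdef]
        rw [Finset.sum_congr rfl (fun k _ => by ring :
          ∀ k ∈ Finset.Icc 1 T, lam * (aP * (1 + |x n k| ^ (qP+1)) + b k * ((T+1) + S n)) =
            lam * aP + lam * aP * |x n k| ^ (qP+1) + (lam * ((T+1) + S n)) * b k)]
        rw [Finset.sum_add_distrib, Finset.sum_add_distrib, Finset.sum_const, ← Finset.mul_sum,
          ← Finset.mul_sum, Nat.card_Icc]
        simp only [Nat.add_sub_cancel, nsmul_eq_mul]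
        ring
      have hq2 : ∑ k ∈ Finset.Icc 1 T, |x n k| ^ (qP+1) ≤ cQ * (S n)^((qP+1)/2) := by
        have hcq := hcQ (x n) (hx0 n) (hxT n)
        have hlr := my_lr (Finset.Icc 1 (T+1)) (fun k => x n k - x n (k-1)) (qP+1) (by linarith)
        calc ∑ k ∈ Finset.Icc 1 T, |x n k| ^ (qP+1)
            ≤ cQ * ∑ k ∈ Finset.Icc 1 (T+1), |x n k - x n (k-1)| ^ (qP+1) := hcq
          _ ≤ cQ * (S n)^((qP+1)/2) := mul_le_mul_of_nonneg_left hlr (le_of_lt hcQpos)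
      calc ∑ k ∈ Finset.Icc 1 T, (lam * f k (x n k) (u n k)) * x n k
          ≤ lam * (aP * T + aP * (∑ k ∈ Finset.Icc 1 T, |x n k| ^ (qP+1)) + B * ((T+1) + S n)) := by
            rw [← hsplit]; exact hsum
        _ ≤ lam * (aP * T + aP * cQ * (S n)^((qP+1)/2) + B * ((T+1) + S n)) := by
            apply mul_le_mul_of_nonneg_left _ (le_of_lt hlam0)
            have := mul_le_mul_of_nonneg_left hq2 haP0
            linarith [this]
    rw [← energy n] at hup
    have hfinal := le_trans hlow hup
    rw [hK₀def]
    linarith [hfinal]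
  -- uniform bound
  -- generic extraction: from an inequality hm*C₁*t^e ≤ Kn (t ≥ 1, e > 0) get t ≤ bound
  have hCpos : 0 < hm * C₁ := mul_pos hmpos hC₁
  have hbound : ∃ M : ℝ, ∀ n, S n ≤ M := by
    have extract : ∀ (e Kn : ℝ), 0 < e → 0 ≤ Kn → ∀ t : ℝ, 1 ≤ t →
        hm * C₁ * t ^ e ≤ Kn → t ≤ (Kn / (hm * C₁)) ^ (1/e) := by
      intro e Kn he hKn t ht1 hineq
      have htpos : (0:ℝ) < t := lt_of_lt_of_le one_pos ht1
      have h1 : t ^ e ≤ Kn / (hm * C₁) := (le_div_iff₀' hCpos).mpr hineq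
      have h2 : t = (t ^ e) ^ (1/e) := by
        rw [← Real.rpow_mul (le_of_lt htpos), mul_one_div, div_self (ne_of_gt he),
          Real.rpow_one]
      rw [h2]
      exact Real.rpow_le_rpow (Real.rpow_nonneg (le_of_lt htpos) e) h1
        (by positivity)
    rcases hexp with hcase | ⟨hpmq, hlam⟩
    · -- subcritical: qP + 1 < pm
      set Kn : ℝ := K₀ + lam*aP*cQ + lam*B with hKndef
      have hKn0 : 0 ≤ Kn := by positivity
      set e : ℝ := (pm - (qP+1))/2 with hedef
      have he : 0 < e := by rw [hedef]; linarith
      refine ⟨max 1 ((Kn / (hm * C₁)) ^ (1/e)), fun n => ?_⟩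
      rcases le_or_gt (S n) 1 with h1 | h1
      · exact le_trans h1 (le_max_left _ _)
      · have ht1 : 1 ≤ S n := le_of_lt h1
        have htpos : (0:ℝ) < S n := lt_of_lt_of_le one_pos ht1
        have hkb := keybound n ht1
        have hq'pos : (0:ℝ) < (S n)^((qP+1)/2) := Real.rpow_pos_of_pos htpos _
        have c1 : S n ≤ (S n)^((qP+1)/2) := by
          nth_rewrite 1 [← Real.rpow_one (S n)]
          exact Real.rpow_le_rpow_of_exponent_le ht1 (by linarith)
        have c2 : (1:ℝ) ≤ (S n)^((qP+1)/2) := Real.one_le_rpow ht1 (by linarith)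
        have hcomb : hm * C₁ * (S n)^(pm/2) ≤ Kn * (S n)^((qP+1)/2) := by
          have e1 : K₀ * 1 ≤ K₀ * (S n)^((qP+1)/2) := mul_le_mul_of_nonneg_left c2 hK₀0
          have e2 : lam * B * S n ≤ lam * B * (S n)^((qP+1)/2) :=
            mul_le_mul_of_nonneg_left c1 (by positivity)
          rw [hKndef]; nlinarith [e1, e2]
        have hsplit : (S n)^(pm/2) = (S n)^((qP+1)/2) * (S n)^e := by
          rw [← Real.rpow_add htpos]; congr 1; rw [hedef]; ring
        rw [hsplit] at hcomb
        have h5 : (hm * C₁ * (S n) ^ e) * (S n)^((qP+1)/2) ≤ Kn * (S n)^((qP+1)/2) := by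
          calc (hm * C₁ * (S n) ^ e) * (S n)^((qP+1)/2)
              = hm * C₁ * ((S n)^((qP+1)/2) * (S n)^e) := by ring
            _ ≤ Kn * (S n)^((qP+1)/2) := hcomb
        have h6 : hm * C₁ * (S n) ^ e ≤ Kn := le_of_mul_le_mul_right h5 hq'pos
        exact le_trans (extract e Kn he hKn0 (S n) ht1 h6) (le_max_right _ _)
    · -- critical: pm = qP + 1
      have hpP0 : 0 < pP := by linarith
      have hdenpos : 0 < pP * aP * cQ := by
        rcases lt_trichotomy (pP * aP * cQ) 0 with hd | hd | hd
        · exfalso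
          have : C₁ * hm * (qm + 1) / (pP * aP * cQ) < 0 :=
            div_neg_of_pos_of_neg (by nlinarith) hd
          linarith
        · exfalso; rw [hd, div_zero] at hlam; linarith
        · exact hd
      have haPpos : 0 < aP := by
        by_contra hc
        push_neg at hc
        nlinarith [mul_pos hpP0 hcQpos]
      have hkey : lam * aP * cQ < hm * C₁ := by
        have h1 : lam * (pP * aP * cQ) < C₁ * hm * (qm + 1) :=
          (lt_div_iff₀ hdenpos).mp hlam
        have h2 : qm + 1 ≤ pP := by linarith
        nlinarith [mul_pos (mul_pos hlam0 haPpos) hcQpos, mul_pos hC₁ hmpos]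
      set ε : ℝ := hm * C₁ - lam * aP * cQ with hεdef
      have hεpos : 0 < ε := by rw [hεdef]; linarith
      set Kn : ℝ := (K₀ + lam*B) * (hm * C₁) / ε with hKndef
      have hKn0 : 0 ≤ Kn := by positivity
      set e : ℝ := pm/2 - 1 with hedef
      have he : 0 < e := by rw [hedef]; linarith
      refine ⟨max 1 ((Kn / (hm * C₁)) ^ (1/e)), fun n => ?_⟩
      rcases le_or_gt (S n) 1 with h1 | h1
      · exact le_trans h1 (le_max_left _ _)
      · have ht1 : 1 ≤ S n := le_of_lt h1
        have htpos : (0:ℝ) < S n := lt_of_lt_of_le one_pos ht1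
        have hkb := keybound n ht1
        rw [← hpmq] at hkb
        have hεineq : ε * (S n)^(pm/2) ≤ (K₀ + lam*B) * S n := by
          have c2 : (1:ℝ) ≤ S n := ht1
          have e1 : K₀ * 1 ≤ K₀ * S n := mul_le_mul_of_nonneg_left c2 hK₀0
          rw [hεdef]; nlinarith [e1]
        have hsplit : (S n)^(pm/2) = S n * (S n)^e := by
          nth_rewrite 2 [← Real.rpow_one (S n)]
          rw [← Real.rpow_add htpos]; congr 1; rw [hedef]; ring
        rw [hsplit] at hεineq
        have h5 : (ε * (S n) ^ e) * S n ≤ (K₀ + lam*B) * S n := by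
          calc (ε * (S n) ^ e) * S n = ε * (S n * (S n)^e) := by ring
            _ ≤ (K₀ + lam*B) * S n := hεineq
        have h6 : ε * (S n) ^ e ≤ K₀ + lam*B := le_of_mul_le_mul_right h5 htpos
        have h7 : hm * C₁ * (S n) ^ e ≤ Kn := by
          rw [hKndef, le_div_iff₀ hεpos]
          nlinarith [Real.rpow_nonneg (le_of_lt htpos) e]
        exact le_trans (extract e Kn he hKn0 (S n) ht1 h7) (le_max_right _ _)
  obtain ⟨M, hM⟩ := hbound
  -- extraction
  set R : ℝ := (T+1:ℝ) + max M 0 with hRdef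
  have hR0 : 0 ≤ R := by positivity
  have hmem : ∀ n, (fun k : Fin (T+2) => x n k) ∈ Metric.closedBall (0 : Fin (T+2) → ℝ) R := by
    intro n
    rw [Metric.mem_closedBall, dist_pi_le_iff hR0]
    intro i
    have hi : (i : ℕ) ≤ T + 1 := Nat.lt_succ_iff.mp i.isLt
    have h1 := habs n i hi
    have h2 : S n ≤ max M 0 := le_trans (hM n) (le_max_left _ _)
    calc dist (x n (i:ℕ)) ((0 : Fin (T+2) → ℝ) i) = |x n (i:ℕ)| := by
          simp [Real.dist_eq]
      _ ≤ R := by rw [hRdef]; linarith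
  obtain ⟨aa, -, φ, hφ, htend⟩ := tendsto_subseq_of_bounded
    (Metric.isBounded_closedBall (x := (0 : Fin (T+2) → ℝ)) (r := R)) hmem
  set xb : ℕ → ℝ := fun k => if hk : k < T+2 then aa ⟨k,hk⟩ else 0 with hxbdef
  have hconv : ∀ k, k ≤ T+1 → Filter.Tendsto (fun i => x (φ i) k) Filter.atTop (nhds (xb k)) := by
    intro k hk
    have hk2 : k < T+2 := by omega
    have hxbk : xb k = aa ⟨k, hk2⟩ := by rw [hxbdef]; exact dif_pos hk2
    rw [hxbk]
    have := tendsto_pi_nhds.mp htend ⟨k, hk2⟩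
    simpa [Function.comp] using this
  have hxb0 : xb 0 = 0 := by
    have h2 := hconv 0 (by omega)
    have h2' : Filter.Tendsto (fun _ : ℕ => (0:ℝ)) Filter.atTop (nhds (xb 0)) := by
      simpa [hx0] using h2
    exact tendsto_nhds_unique h2' tendsto_const_nhds
  have hxbT : xb (T+1) = 0 := by
    have h2 := hconv (T+1) (by omega)
    have h2' : Filter.Tendsto (fun _ : ℕ => (0:ℝ)) Filter.atTop (nhds (xb (T+1))) := by
      simpa [hxT] using h2
    exact tendsto_nhds_unique h2' tendsto_const_nhds
  refine ⟨φ, hφ, xb, hconv, hxb0, hxbT, ?_, ?_⟩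
  · intro k hk
    rw [hxbdef]
    exact dif_neg (by omega)
  · intro k hk
    obtain ⟨hk1, hk2⟩ := Finset.mem_Icc.mp hk
    have hkp : 1 < p k := hp k (Finset.mem_Icc.mpr ⟨Nat.zero_le _, hk2⟩)
    have hkm : k - 1 ∈ Finset.Icc 0 T := Finset.mem_Icc.mpr ⟨Nat.zero_le _, by omega⟩
    have hkp' : 1 < p (k-1) := hp _ hkm
    have t1 := hconv (k+1) (by omega)
    have t0 := hconv k (by omega)
    have tm := hconv (k-1) (by omega)
    have hu : Filter.Tendsto (fun i => u (φ i) k) Filter.atTop (nhds (ubar k)) :=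
      (huconv k hk).comp hφ.tendsto_atTop
    have hd1 : Filter.Tendsto (fun i => x (φ i) (k+1) - x (φ i) k) Filter.atTop
        (nhds (xb (k+1) - xb k)) := t1.sub t0
    have hd0 : Filter.Tendsto (fun i => x (φ i) k - x (φ i) (k-1)) Filter.atTop
        (nhds (xb k - xb (k-1))) := t0.sub tm
    have g1 := my_tendsto_g (p k - 2) (by linarith) _ _ hd1
    have g2 := my_tendsto_g (p (k-1) - 2) (by linarith) _ _ hd0
    have hL : Filter.Tendsto (fun i =>
        -(h k * |x (φ i) (k+1) - x (φ i) k| ^ (p k - 2) * (x (φ i) (k+1) - x (φ i) k) -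
          h (k-1) * |x (φ i) k - x (φ i) (k-1)| ^ (p (k-1) - 2) * (x (φ i) k - x (φ i) (k-1))))
        Filter.atTop (nhds (-(h k * |xb (k+1) - xb k| ^ (p k - 2) * (xb (k+1) - xb k) -
          h (k-1) * |xb k - xb (k-1)| ^ (p (k-1) - 2) * (xb k - xb (k-1))))) := by
      have l1 := g1.const_mul (h k)
      have l2 := g2.const_mul (h (k-1))
      have l3 := (l1.sub l2).neg
      simpa only [mul_assoc] using l3
    have hR : Filter.Tendsto (fun i => lam * f k (x (φ i) k) (u (φ i) k)) Filter.atTop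
        (nhds (lam * f k (xb k) (ubar k))) := by
      have hpair : Filter.Tendsto (fun i => (x (φ i) k, u (φ i) k)) Filter.atTop
          (nhds (xb k, ubar k)) := t0.prodMk_nhds hu
      exact (((hcont k).tendsto (xb k, ubar k)).comp hpair).const_mul lam
    have hL' : Filter.Tendsto (fun i => lam * f k (x (φ i) k) (u (φ i) k)) Filter.atTop
        (nhds (-(h k * |xb (k+1) - xb k| ^ (p k - 2) * (xb (k+1) - xb k) -
          h (k-1) * |xb k - xb (k-1)| ^ (p (k-1) - 2) * (xb k - xb (k-1))))) := by
      apply hL.congr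
      intro i
      exact heqn (φ i) k hk
    exact tendsto_nhds_unique hL' hR
end
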